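/- arXiv:2512.05549 — 9 statements merged into one kernel-verified Lean document; each statement's English description precedes it below -/
import Mathlib

section
/- Let X ⊆ ℝⁿ be a Borel set, (D, 𝒟, P_d) a probability space, and f : ℝⁿ × D → ℝⁿ a map such that d ↦ f(x,d) is measurable for each fixed x ∈ X. Let h : ℝⁿ → ℝ be Borel measurable and λ ∈ [0,1]. Suppose: (i) h(x) ≥ 0 for all x ∈ X; (ii) h(x) ≥ 1 for all x ∈ ℝⁿ \ X; (iii) for every x ∈ X the function d ↦ h(f(x,d)) is P_d-integrable and ∫ h(f(x,d)) dP_d(d) − h(x) ≤ λ. Then for every x ∈ X, P_d{d ∈ D : f(x,d) ∈ X} ≥ 1 − λ − h(x). -/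
open MeasureTheory

/-- A stochastic barrier certificate (SBC) yields a one-step safety probability bound:
if `h ≥ 0` on the safe set `X`, `h ≥ 1` outside `X`, and the expected value of `h`
after one step exceeds `h x` by at most `lam`, then for every `x ∈ X` the probability
that the successor `f x d` stays in `X` is at least `1 - lam - h x`. -/
theorem sbc_one_step_safety_prob {n : ℕ} {D : Type*} [MeasurableSpace D]
    (Pd : Measure D) [IsProbabilityMeasure Pd]
    (X : Set (Fin n → ℝ)) (hX : MeasurableSet X)
    (f : (Fin n → ℝ) → D → (Fin n → ℝ))
    (hf : ∀ x ∈ X, Measurable (fun d => f x d))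
    (h : (Fin n → ℝ) → ℝ) (hh : Measurable h)
    (lam : ℝ) (hlam : lam ∈ Set.Icc (0 : ℝ) 1)
    (h1 : ∀ x ∈ X, 0 ≤ h x)
    (h2 : ∀ x, x ∉ X → 1 ≤ h x)
    (h3 : ∀ x ∈ X, Integrable (fun d => h (f x d)) Pd ∧
      (∫ d, h (f x d) ∂Pd) - h x ≤ lam) :
    ∀ x ∈ X, Pd {d | f x d ∈ X} ≥ ENNReal.ofReal (1 - lam - h x) := by
  intro x hx
  set A : Set D := {d | f x d ∈ X} with hA
  have hmA : MeasurableSet A := (hf x hx) hX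
  obtain ⟨hint, hle⟩ := h3 x hx
  -- indicator bound: indicator of Aᶜ ≤ h ∘ f
  have hind : ∀ d, (Aᶜ).indicator (fun _ => (1:ℝ)) d ≤ h (f x d) := by
    intro d
    by_cases hd : d ∈ A
    · simp [Set.indicator_of_notMem, hd]
      exact h1 _ hd
    · rw [Set.indicator_of_mem (by simpa using hd)]
      exact h2 _ hd
  have hintind : Integrable ((Aᶜ).indicator (fun _ => (1:ℝ))) Pd :=
    (integrable_const (1:ℝ)).indicator hmA.compl
  have hInt : (Pd Aᶜ).toReal ≤ ∫ d, h (f x d) ∂Pd := by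
    have := integral_mono hintind hint hind
    rwa [integral_indicator_const (1:ℝ) hmA.compl, smul_eq_mul, mul_one] at this
  have hcompl : Pd Aᶜ ≤ ENNReal.ofReal (lam + h x) := by
    rw [← ENNReal.ofReal_toReal (measure_ne_top Pd Aᶜ)]
    exact ENNReal.ofReal_le_ofReal (hInt.trans (by linarith))
  have hA1 : Pd A = 1 - Pd Aᶜ := by
    rw [measure_compl hmA (measure_ne_top _ _), measure_univ]
    rw [ENNReal.sub_sub_cancel (by simp) (prob_le_one)]
  rw [ge_iff_le, hA1]
  calc ENNReal.ofReal (1 - lam - h x)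
      ≤ 1 - ENNReal.ofReal (lam + h x) := by
        rw [show (1:ℝ) - lam - h x = 1 - (lam + h x) by ring,
          ENNReal.ofReal_sub _ (by linarith [h1 x hx, hlam.1]), ENNReal.ofReal_one]
    _ ≤ 1 - Pd Aᶜ := tsub_le_tsub_left hcompl 1
end

section
/- Let X ⊆ ℝⁿ be a Borel set, P_x a probability measure on X, (D, 𝒟, P_d) a probability space, and f : X × D → ℝⁿ measurable with respect to the product σ-algebra. Let γ ∈ (0,1), α₁, α₂ ∈ (0,1), and let h : ℝⁿ → ℝ be Borel measurable with h(y) ≥ 0 for all y ∈ X and h(y) < 0 for all y ∈ ℝⁿ \ X. If (P_x ⊗ P_d){(x,d) : h(f(x,d)) < γ·h(x)} ≤ α₁·α₂, then P_x{x ∈ X : P_d({d ∈ D : f(x,d) ∈ X}) ≥ 1 − α₂} ≥ 1 − α₁. -/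
open MeasureTheory

/-- PAC safety certification I (barrier form): if the joint probability that the
barrier decrease condition `h (f (x,d)) ≥ γ · h x` is violated is at most `α₁·α₂`,
then for at least a `1 − α₁` fraction of states `x ∈ X` the one-step safety
probability `P_d [f (x,d) ∈ X]` is at least `1 − α₂`. -/
theorem pac_one_step_safety_I {n : ℕ} {D : Type*} [MeasurableSpace D]
    (X : Set (Fin n → ℝ)) (hX : MeasurableSet X)
    (Px : Measure ↥X) (Pd : Measure D)
    [IsProbabilityMeasure Px] [IsProbabilityMeasure Pd]
    (f : ↥X × D → (Fin n → ℝ)) (hf : Measurable f)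
    (γ : ℝ) (hγ : γ ∈ Set.Ioo (0 : ℝ) 1)
    (α₁ α₂ : ℝ) (hα₁ : α₁ ∈ Set.Ioo (0 : ℝ) 1) (hα₂ : α₂ ∈ Set.Ioo (0 : ℝ) 1)
    (h : (Fin n → ℝ) → ℝ) (hh : Measurable h)
    (hpos : ∀ y ∈ X, 0 ≤ h y) (hneg : ∀ y, y ∉ X → h y < 0)
    (hjoint : (Px.prod Pd) {p : ↥X × D | h (f p) < γ * h ↑p.1} ≤ ENNReal.ofReal (α₁ * α₂)) :
    Px {x : ↥X | Pd {d | f (x, d) ∈ X} ≥ ENNReal.ofReal (1 - α₂)} ≥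
      ENNReal.ofReal (1 - α₁) := by
  set S : Set (↥X × D) := {p : ↥X × D | h (f p) < γ * h ↑p.1} with hS
  have hSm : MeasurableSet S :=
    measurableSet_lt (hh.comp hf) (measurable_const.mul (hh.comp (measurable_subtype_coe.comp measurable_fst)))
  set g : ↥X → ENNReal := fun x => Pd (Prod.mk x ⁻¹' S) with hg
  have hgm : Measurable g := measurable_measure_prodMk_left hSm
  -- lintegral of g equals joint measure
  have hint : ∫⁻ x, g x ∂Px = (Px.prod Pd) S := (Measure.prod_apply hSm).symm
  -- Markov
  have hmarkov : ENNReal.ofReal α₂ * Px {x | ENNReal.ofReal α₂ ≤ g x} ≤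
      ENNReal.ofReal α₁ * ENNReal.ofReal α₂ := by
    calc ENNReal.ofReal α₂ * Px {x | ENNReal.ofReal α₂ ≤ g x}
        ≤ ∫⁻ x, g x ∂Px := mul_meas_ge_le_lintegral₀ hgm.aemeasurable _
      _ ≤ ENNReal.ofReal (α₁ * α₂) := hint ▸ hjoint
      _ = ENNReal.ofReal α₁ * ENNReal.ofReal α₂ :=
          ENNReal.ofReal_mul hα₁.1.le
  have hα₂pos : (0 : ENNReal) < ENNReal.ofReal α₂ := ENNReal.ofReal_pos.mpr hα₂.1
  have hbig : Px {x | ENNReal.ofReal α₂ ≤ g x} ≤ ENNReal.ofReal α₁ := by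
    rw [mul_comm (ENNReal.ofReal α₁)] at hmarkov
    exact (ENNReal.mul_le_mul_iff_right hα₂pos.ne' ENNReal.ofReal_ne_top).mp hmarkov
  -- set inclusion: complement of {g ≥ α₂} is inside target set
  have hsub : {x : ↥X | ENNReal.ofReal α₂ ≤ g x}ᶜ ⊆
      {x : ↥X | Pd {d | f (x, d) ∈ X} ≥ ENNReal.ofReal (1 - α₂)} := by
    intro x hx
    simp only [Set.mem_compl_iff, Set.mem_setOf_eq, not_le] at hx
    have hsub2 : (Prod.mk x ⁻¹' S)ᶜ ⊆ {d | f (x, d) ∈ X} := by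
      intro d hd
      simp only [Set.mem_compl_iff, Set.mem_preimage, hS, Set.mem_setOf_eq, not_lt] at hd
      by_contra hout
      have hlt := hneg _ hout
      have : (0:ℝ) ≤ γ * h ↑x := mul_nonneg hγ.1.le (hpos _ x.2)
      linarith
    have hcompl : Pd (Prod.mk x ⁻¹' S)ᶜ = 1 - g x :=
      prob_compl_eq_one_sub (measurable_prodMk_left hSm)
    have : ENNReal.ofReal (1 - α₂) ≤ 1 - g x := by
      rw [ENNReal.ofReal_sub _ hα₂.1.le, ENNReal.ofReal_one]
      exact tsub_le_tsub_left hx.le 1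
    exact le_trans (this.trans_eq hcompl.symm) (measure_mono hsub2)
  calc ENNReal.ofReal (1 - α₁)
      = 1 - ENNReal.ofReal α₁ := by
        rw [ENNReal.ofReal_sub _ hα₁.1.le, ENNReal.ofReal_one]
    _ ≤ 1 - Px {x | ENNReal.ofReal α₂ ≤ g x} := tsub_le_tsub_left hbig 1
    _ = Px {x | ENNReal.ofReal α₂ ≤ g x}ᶜ :=
        (prob_compl_eq_one_sub (hgm measurableSet_Ici)).symm
    _ ≤ _ := measure_mono hsub
end

section
/- Let (D, 𝒟, P_d) be a probability space, B ⊆ D measurable, and μ = P_d(B). Let M ≥ 1 be an integer and α₂, l, δ₂ ∈ (0,1) with M ≥ (1/(2·α₂²))·ln(1/((1−l)·δ₂)). If P_d^M{(d₁,…,d_M) ∈ D^M : d_j ∉ B for all j = 1,…,M} ≥ 1 − l·δ₂, then μ < α₂. -/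
open MeasureTheory

lemma one_sub_le_exp_neg_two_sq {x : ℝ} (hx0 : 0 ≤ x) (hx1 : x ≤ 1) :
    1 - x ≤ Real.exp (-(2 * x ^ 2)) := by
  rcases le_or_gt x (1/2) with hhalf | hhalf
  · have h1 : 1 - x ≤ Real.exp (-x) := by
      have := Real.add_one_le_exp (-x); linarith
    have h2 : Real.exp (-x) ≤ Real.exp (-(2 * x ^ 2)) := by
      apply Real.exp_le_exp.mpr; nlinarith
    linarith
  · have hx0' : (1:ℝ)/2 ≤ x := le_of_lt hhalf
    have h1 : 1 - x ≤ (1 - x ^ 2 / 2) ^ 4 := by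
      nlinarith [mul_nonneg (sub_nonneg.mpr hx0') (sub_nonneg.mpr hx1), sq_nonneg (x - 4/5),
        sq_nonneg ((x - 4/5)*(1-x)), sq_nonneg ((x-4/5)*(x-1/2)), sq_nonneg (x^2 - 2/3),
        mul_nonneg (mul_nonneg (sub_nonneg.mpr hx0') (sub_nonneg.mpr hx0')) (sub_nonneg.mpr hx1),
        sq_nonneg (x*(1-x))]
    have h2 : (0 : ℝ) ≤ 1 - x ^ 2 / 2 := by nlinarith
    have h3 : 1 - x ^ 2 / 2 ≤ Real.exp (-(x ^ 2 / 2)) := by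
      have := Real.add_one_le_exp (-(x ^ 2 / 2)); linarith
    have h4 : (1 - x ^ 2 / 2) ^ 4 ≤ Real.exp (-(x ^ 2 / 2)) ^ 4 :=
      pow_le_pow_left₀ h2 h3 4
    calc 1 - x ≤ (1 - x ^ 2 / 2) ^ 4 := h1
      _ ≤ Real.exp (-(x ^ 2 / 2)) ^ 4 := h4
      _ = Real.exp (-(2 * x ^ 2)) := by
          rw [← Real.exp_nat_mul]; ring_nf

/-- Hoeffding + positive-intersection argument: if with probability at least
`1 − l·δ₂` none of `M` i.i.d. draws lands in `B`, where `M` meets the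
Hoeffding sample bound, then `P_d(B) < α₂`. -/
theorem hoeffding_empirical_zero {D : Type*} [MeasurableSpace D]
    (Pd : Measure D) [IsProbabilityMeasure Pd]
    (B : Set D) (hB : MeasurableSet B)
    (M : ℕ) (hM : 1 ≤ M)
    (α₂ l δ₂ : ℝ) (hα₂ : α₂ ∈ Set.Ioo (0 : ℝ) 1) (hl : l ∈ Set.Ioo (0 : ℝ) 1)
    (hδ₂ : δ₂ ∈ Set.Ioo (0 : ℝ) 1)
    (hMbound : (M : ℝ) ≥ (1 / (2 * α₂ ^ 2)) * Real.log (1 / ((1 - l) * δ₂)))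
    (hemp : (Measure.pi fun _ : Fin M => Pd) {d : Fin M → D | ∀ j, d j ∉ B} ≥
      ENNReal.ofReal (1 - l * δ₂)) :
    (Pd B).toReal < α₂ := by
  obtain ⟨hα₂0, hα₂1⟩ := hα₂
  obtain ⟨hl0, hl1⟩ := hl
  obtain ⟨hδ₂0, hδ₂1⟩ := hδ₂
  set μ : ℝ := (Pd B).toReal with hμ
  have hμ0 : 0 ≤ μ := ENNReal.toReal_nonneg
  have hμ1 : μ ≤ 1 := by
    have := prob_le_one (μ := Pd) (s := B)
    simpa [hμ] using ENNReal.toReal_mono (by simp) this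
  -- compute the pi measure
  have hset : {d : Fin M → D | ∀ j, d j ∉ B} = Set.pi Set.univ (fun _ : Fin M => Bᶜ) := by
    ext d; simp [Set.mem_pi]
  have hpi : (Measure.pi fun _ : Fin M => Pd) {d : Fin M → D | ∀ j, d j ∉ B}
      = (Pd Bᶜ) ^ M := by
    rw [hset, Measure.pi_pi]
    simp
  have hcompl : (Pd Bᶜ).toReal = 1 - μ := by
    rw [measure_compl hB (measure_ne_top _ _)]
    rw [measure_univ, ENNReal.toReal_sub_of_le prob_le_one (by simp)]
    simp [hμ]
  -- move hemp to the reals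
  have hfin : (Pd Bᶜ) ^ M ≠ ⊤ := by
    exact ENNReal.pow_ne_top (measure_ne_top _ _)
  have hreal : 1 - l * δ₂ ≤ (1 - μ) ^ M := by
    rw [hpi] at hemp
    have := (ENNReal.ofReal_le_iff_le_toReal hfin).mp hemp
    rwa [ENNReal.toReal_pow, hcompl] at this
  by_contra hcon
  push_neg at hcon
  have h1μ : 1 - μ ≤ 1 - α₂ := by linarith
  have h1α0 : (0 : ℝ) ≤ 1 - α₂ := by linarith
  have step1 : (1 - μ) ^ M ≤ (1 - α₂) ^ M := pow_le_pow_left₀ (by linarith) h1μ M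
  have step2 : (1 - α₂) ^ M ≤ Real.exp (-(2 * α₂ ^ 2)) ^ M :=
    pow_le_pow_left₀ h1α0 (one_sub_le_exp_neg_two_sq (le_of_lt hα₂0) (le_of_lt hα₂1)) M
  have hc0 : (0 : ℝ) < (1 - l) * δ₂ := by nlinarith
  have step3 : Real.exp (-(2 * α₂ ^ 2)) ^ M ≤ (1 - l) * δ₂ := by
    rw [← Real.exp_nat_mul]
    have hlog : Real.log (1 / ((1 - l) * δ₂)) = -Real.log ((1 - l) * δ₂) := by
      rw [one_div, Real.log_inv]
    have hα₂sq : (0 : ℝ) < 2 * α₂ ^ 2 := by positivity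
    have hMb : (M : ℝ) * (2 * α₂ ^ 2) ≥ -Real.log ((1 - l) * δ₂) := by
      rw [hlog] at hMbound
      have := mul_le_mul_of_nonneg_right hMbound (le_of_lt hα₂sq)
      calc -Real.log ((1 - l) * δ₂)
          = 1 / (2 * α₂ ^ 2) * -Real.log ((1 - l) * δ₂) * (2 * α₂ ^ 2) := by
            field_simp
        _ ≤ (M : ℝ) * (2 * α₂ ^ 2) := this
    have : (M : ℝ) * -(2 * α₂ ^ 2) ≤ Real.log ((1 - l) * δ₂) := by nlinarith
    calc Real.exp ((M : ℝ) * -(2 * α₂ ^ 2)) ≤ Real.exp (Real.log ((1 - l) * δ₂)) :=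
          Real.exp_le_exp.mpr this
      _ = (1 - l) * δ₂ := Real.exp_log hc0
  have : 1 - l * δ₂ ≤ (1 - l) * δ₂ := le_trans hreal (le_trans step1 (le_trans step2 step3))
  nlinarith
end

section
/- Let (D, 𝒟, P_d) be a probability space and g : D → ℝ measurable with 0 ≤ g(d) ≤ U for all d ∈ D, where U > 0. Let μ = ∫ g dP_d, c ∈ ℝ, τ > 0, l, δ₂ ∈ (0,1), and let M ≥ 1 be an integer with M ≥ (U²/(2·τ²))·ln(1/((1−l)·δ₂)). If P_d^M{(d₁,…,d_M) ∈ D^M : (1/M)·Σ_{j=1}^M g(d_j) ≤ c − τ} ≥ 1 − l·δ₂, then μ ≤ c. -/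
open MeasureTheory

open Real in
lemma hoeffding_key (p : ℝ) (hp0 : 0 ≤ p) (hp1 : p ≤ 1) (h : ℝ) :
    1 - p + p * Real.exp h ≤ Real.exp (p * h + h ^ 2 / 8) := by
  have hq : ∀ x : ℝ, 0 < 1 - p + p * Real.exp x := by
    intro x
    rcases le_total (Real.exp x) 1 with hx | hx
    · nlinarith [Real.exp_pos x]
    · nlinarith [mul_le_mul_of_nonneg_left hx hp0]
  set F : ℝ → ℝ := fun x => p * x + x ^ 2 / 8 - Real.log (1 - p + p * Real.exp x) with hF_def
  set G : ℝ → ℝ := fun x => p + x / 4 - p * Real.exp x / (1 - p + p * Real.exp x) with hG_def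
  have hqd : ∀ x : ℝ, HasDerivAt (fun x => 1 - p + p * Real.exp x) (p * Real.exp x) x := by
    intro x
    simpa using ((Real.hasDerivAt_exp x).const_mul p).const_add (1 - p)
  have hF : ∀ x : ℝ, HasDerivAt F (G x) x := by
    intro x
    have h1 : HasDerivAt (fun x : ℝ => p * x) p x := by
      simpa using (hasDerivAt_id x).const_mul p
    have h2 : HasDerivAt (fun x : ℝ => x ^ 2 / 8) (x / 4) x := by
      have : HasDerivAt (fun x : ℝ => x ^ 2 / 8) ((2:ℕ) * x ^ (2 - 1) / 8) x :=
        (hasDerivAt_pow 2 x).div_const 8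
      convert this using 1
      norm_num
      ring
    have h3 : HasDerivAt (fun x => Real.log (1 - p + p * Real.exp x))
        (p * Real.exp x / (1 - p + p * Real.exp x)) x := (hqd x).log (hq x).ne'
    exact (h1.add h2).sub h3
  have hG : ∀ x : ℝ, HasDerivAt G
      (1 / 4 - p * Real.exp x * (1 - p) / (1 - p + p * Real.exp x) ^ 2) x := by
    intro x
    have h1 : HasDerivAt (fun x : ℝ => p + x / 4) (1 / 4) x := by
      simpa using ((hasDerivAt_id x).div_const 4).const_add p
    have h2 : HasDerivAt (fun x => p * Real.exp x / (1 - p + p * Real.exp x))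
        ((p * Real.exp x * (1 - p + p * Real.exp x) - p * Real.exp x * (p * Real.exp x)) /
          (1 - p + p * Real.exp x) ^ 2) x :=
      ((Real.hasDerivAt_exp x).const_mul p).div (hqd x) (hq x).ne'
    have : HasDerivAt G (1 / 4 - ((p * Real.exp x * (1 - p + p * Real.exp x) -
        p * Real.exp x * (p * Real.exp x)) / (1 - p + p * Real.exp x) ^ 2)) x := h1.sub h2
    convert this using 1
    have hqx := (hq x).ne'
    field_simp
    ring
  have hG'nonneg : ∀ x : ℝ,
      0 ≤ 1 / 4 - p * Real.exp x * (1 - p) / (1 - p + p * Real.exp x) ^ 2 := by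
    intro x
    rw [sub_nonneg, div_le_iff₀ (by have := hq x; positivity)]
    nlinarith [sq_nonneg (1 - p - p * Real.exp x)]
  have hGmono : Monotone G :=
    monotone_of_deriv_nonneg (fun x => (hG x).differentiableAt)
      (fun x => by rw [(hG x).deriv]; exact hG'nonneg x)
  have hG0 : G 0 = 0 := by
    simp only [hG_def, Real.exp_zero, mul_one]
    have : (1 : ℝ) - p + p = 1 := by ring
    rw [this]
    norm_num
  have hFdiff : Differentiable ℝ F := fun x => (hF x).differentiableAt
  have hF0 : F 0 = 0 := by
    simp only [hF_def, Real.exp_zero, mul_one, mul_zero]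
    have : (1 : ℝ) - p + p = 1 := by ring
    rw [this]
    norm_num
  have hFnonneg : ∀ x : ℝ, 0 ≤ F x := by
    intro x
    rcases le_total 0 x with hx | hx
    · have hmono : MonotoneOn F (Set.Ici 0) := by
        refine monotoneOn_of_deriv_nonneg (convex_Ici 0) hFdiff.continuous.continuousOn
          (fun y _ => hFdiff y |>.differentiableWithinAt) ?_
        intro y hy
        rw [(hF y).deriv]
        have : G 0 ≤ G y := hGmono (le_of_lt (by simpa using hy))
        linarith [hG0 ▸ this]
      have := hmono (Set.self_mem_Ici) (Set.mem_Ici.mpr hx) hx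
      linarith [hF0 ▸ this]
    · have hanti : AntitoneOn F (Set.Iic 0) := by
        refine antitoneOn_of_deriv_nonpos (convex_Iic 0) hFdiff.continuous.continuousOn
          (fun y _ => hFdiff y |>.differentiableWithinAt) ?_
        intro y hy
        rw [(hF y).deriv]
        have : G y ≤ G 0 := hGmono (le_of_lt (by simpa using hy))
        linarith [hG0 ▸ this]
      have := hanti (Set.mem_Iic.mpr hx) (Set.self_mem_Iic) hx
      linarith [hF0 ▸ this]
  have hlog : Real.log (1 - p + p * Real.exp h) ≤ p * h + h ^ 2 / 8 := by
    have := hFnonneg h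
    simp only [hF_def] at this
    linarith
  calc 1 - p + p * Real.exp h = Real.exp (Real.log (1 - p + p * Real.exp h)) :=
        (Real.exp_log (hq h)).symm
    _ ≤ Real.exp (p * h + h ^ 2 / 8) := Real.exp_le_exp.mpr hlog

open Real in
lemma exp_mul_integrable {D : Type*} [MeasurableSpace D] (Pd : Measure D)
    [IsProbabilityMeasure Pd] (g : D → ℝ) (hg : Measurable g) (U : ℝ)
    (hgbdd : ∀ d, 0 ≤ g d ∧ g d ≤ U) (t : ℝ) :
    Integrable (fun d => Real.exp (t * g d)) Pd := by
  refine Integrable.mono' (integrable_const (Real.exp (|t| * U)))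
    (hg.const_mul t).exp.aestronglyMeasurable (ae_of_all _ fun d => ?_)
  rw [Real.norm_eq_abs, Real.abs_exp]
  refine Real.exp_le_exp.mpr ?_
  calc t * g d ≤ |t * g d| := le_abs_self _
    _ = |t| * |g d| := abs_mul t (g d)
    _ = |t| * g d := by rw [abs_of_nonneg (hgbdd d).1]
    _ ≤ |t| * U := mul_le_mul_of_nonneg_left (hgbdd d).2 (abs_nonneg t)

lemma mgf_le_hoeffding {D : Type*} [MeasurableSpace D] (Pd : Measure D)
    [IsProbabilityMeasure Pd] (g : D → ℝ) (hg : Measurable g) (U : ℝ) (hU : 0 < U)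
    (hgbdd : ∀ d, 0 ≤ g d ∧ g d ≤ U) (t : ℝ) :
    ProbabilityTheory.mgf g Pd t ≤
      Real.exp (t * (∫ d, g d ∂Pd) + t ^ 2 * U ^ 2 / 8) := by
  set m := ∫ d, g d ∂Pd with hm_def
  have hgint : Integrable g Pd := by
    refine Integrable.mono' (integrable_const U) hg.aestronglyMeasurable
      (ae_of_all _ fun d => ?_)
    rw [Real.norm_eq_abs, abs_of_nonneg (hgbdd d).1]
    exact (hgbdd d).2
  have hm0 : 0 ≤ m := integral_nonneg fun d => (hgbdd d).1
  have hmU : m ≤ U := by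
    calc m ≤ ∫ _, U ∂Pd := integral_mono hgint (integrable_const U) fun d => (hgbdd d).2
      _ = U := by simp
  set p := m / U with hp_def
  have hp0 : 0 ≤ p := div_nonneg hm0 hU.le
  have hp1 : p ≤ 1 := (div_le_one hU).mpr hmU
  -- pointwise convexity bound
  have hpt : ∀ d, Real.exp (t * g d) ≤
      1 + (Real.exp (t * U) - 1) / U * g d := by
    intro d
    obtain ⟨h0, hUd⟩ := hgbdd d
    set θ := g d / U with hθ_def
    have hθ0 : 0 ≤ θ := div_nonneg h0 hU.le
    have hθ1 : θ ≤ 1 := (div_le_one hU).mpr hUd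
    have key := convexOn_exp.2 (Set.mem_univ (0:ℝ)) (Set.mem_univ (t*U))
      (by linarith : (0:ℝ) ≤ 1 - θ) hθ0 (by ring)
    simp only [smul_eq_mul, mul_zero, zero_add, Real.exp_zero, mul_one] at key
    have harg : θ * (t * U) = t * g d := by
      rw [hθ_def]
      field_simp
    rw [harg] at key
    calc Real.exp (t * g d) ≤ 1 - θ + θ * Real.exp (t * U) := key
      _ = 1 + (Real.exp (t * U) - 1) / U * g d := by
        rw [hθ_def]
        field_simp
        ring
  have hmgf : ProbabilityTheory.mgf g Pd t ≤ 1 - p + p * Real.exp (t * U) := by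
    have hub : ProbabilityTheory.mgf g Pd t ≤
        ∫ d, (1 + (Real.exp (t * U) - 1) / U * g d) ∂Pd := by
      refine integral_mono (exp_mul_integrable Pd g hg U hgbdd t) ?_ hpt
      exact (integrable_const 1).add (hgint.const_mul _)
    rw [integral_add (integrable_const 1) (hgint.const_mul _)] at hub
    simp only [integral_const, measure_univ, ENNReal.toReal_one, smul_eq_mul, one_mul,
      integral_const_mul, probReal_univ] at hub
    calc ProbabilityTheory.mgf g Pd t ≤ 1 + (Real.exp (t * U) - 1) / U * m := hub
      _ = 1 - p + p * Real.exp (t * U) := by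
        rw [hp_def]
        field_simp
        ring
  have hexp : p * (t * U) + (t * U) ^ 2 / 8 = t * m + t ^ 2 * U ^ 2 / 8 := by
    rw [hp_def]
    field_simp
  calc ProbabilityTheory.mgf g Pd t ≤ 1 - p + p * Real.exp (t * U) := hmgf
    _ ≤ Real.exp (p * (t * U) + (t * U) ^ 2 / 8) := hoeffding_key p hp0 hp1 (t * U)
    _ = Real.exp (t * m + t ^ 2 * U ^ 2 / 8) := by rw [hexp]

open Real ProbabilityTheory in
/-- Hoeffding + positive-intersection argument for bounded means: if with probability
at least `1 − l·δ₂` the empirical mean of `M` i.i.d. draws of `g` (bounded in `[0,U]`)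
is at most `c − τ`, where `M` meets the Hoeffding sample bound, then the true mean
`μ = ∫ g dP_d` satisfies `μ ≤ c`. -/
theorem hoeffding_empirical_mean {D : Type*} [MeasurableSpace D]
    (Pd : Measure D) [IsProbabilityMeasure Pd]
    (g : D → ℝ) (hg : Measurable g)
    (U : ℝ) (hU : 0 < U) (hgbdd : ∀ d, 0 ≤ g d ∧ g d ≤ U)
    (c τ : ℝ) (hτ : 0 < τ)
    (l δ₂ : ℝ) (hl : l ∈ Set.Ioo (0 : ℝ) 1) (hδ₂ : δ₂ ∈ Set.Ioo (0 : ℝ) 1)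
    (M : ℕ) (hM : 1 ≤ M)
    (hMbound : (M : ℝ) ≥ (U ^ 2 / (2 * τ ^ 2)) * Real.log (1 / ((1 - l) * δ₂)))
    (hemp : (Measure.pi fun _ : Fin M => Pd)
        {d : Fin M → D | (1 / (M : ℝ)) * ∑ j, g (d j) ≤ c - τ} ≥
      ENNReal.ofReal (1 - l * δ₂)) :
    (∫ d, g d ∂Pd) ≤ c := by
  by_contra hcon
  push_neg at hcon
  set m := ∫ d, g d ∂Pd with hm_def
  set P : Measure (Fin M → D) := Measure.pi fun _ : Fin M => Pd with hP_def
  haveI : IsProbabilityMeasure P := by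
    rw [hP_def]; infer_instance
  set S : (Fin M → D) → ℝ := fun d => ∑ j, g (d j) with hS_def
  set t : ℝ := -(4 * τ / U ^ 2) with ht_def
  have ht : t ≤ 0 := by
    rw [ht_def, neg_nonpos]
    positivity
  have hMpos : (0:ℝ) < (M:ℝ) := by exact_mod_cast hM
  -- integrability of exp (t * S)
  have h_int_S : Integrable (fun ω => Real.exp (t * S ω)) P := by
    have : (fun ω : Fin M → D => Real.exp (t * S ω)) =
        fun ω => ∏ j, Real.exp (t * g (ω j)) := by
      funext ω
      rw [hS_def, Finset.mul_sum, Real.exp_sum]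
    rw [this]
    letI : MeasureSpace D := ⟨Pd⟩
    haveI : SigmaFinite (volume : Measure D) :=
      (inferInstance : SigmaFinite Pd)
    have := MeasureTheory.Integrable.fintype_prod (𝕜 := ℝ) (ι := Fin M)
      (f := fun _ x => Real.exp (t * g x))
      (fun _ => exp_mul_integrable Pd g hg U hgbdd t)
    simpa [hP_def, MeasureTheory.volume_pi] using this
  -- mgf of the sum
  have hmgf_sum : ProbabilityTheory.mgf S P t = (ProbabilityTheory.mgf g Pd t) ^ M := by
    letI : MeasureSpace D := ⟨Pd⟩
    haveI : SigmaFinite (volume : Measure D) :=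
      (inferInstance : SigmaFinite Pd)
    have h1 : ProbabilityTheory.mgf S P t =
        ∫ ω : Fin M → D, ∏ j, Real.exp (t * g (ω j)) ∂P := by
      rw [ProbabilityTheory.mgf]
      congr 1
      funext ω
      simp only [hS_def, Finset.mul_sum, Real.exp_sum]
    have h2 := MeasureTheory.integral_fintype_prod_volume_eq_pow (ι := Fin M)
      (f := fun x => Real.exp (t * g x))
    rw [h1]
    have hPvol : P = (volume : Measure (Fin M → D)) := by
      rw [hP_def, MeasureTheory.volume_pi]
      rfl
    rw [hPvol]
    rw [Fintype.card_fin] at h2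
    exact h2
  -- Chernoff bound
  have hcher := ProbabilityTheory.measure_le_le_exp_mul_mgf (μ := P) (X := S)
    ((M : ℝ) * (m - τ)) ht h_int_S
  -- bound the mgf
  have hmgf_le : ProbabilityTheory.mgf S P t ≤
      Real.exp (t * m + t ^ 2 * U ^ 2 / 8) ^ M := by
    rw [hmgf_sum]
    exact pow_le_pow_left₀ ProbabilityTheory.mgf_nonneg
      (mgf_le_hoeffding Pd g hg U hU hgbdd t) M
  have hchain : (P {ω | S ω ≤ (M : ℝ) * (m - τ)}).toReal ≤
      Real.exp (-(2 * (M : ℝ) * τ ^ 2 / U ^ 2)) := by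
    calc (P {ω | S ω ≤ (M : ℝ) * (m - τ)}).toReal
        ≤ Real.exp (-t * ((M : ℝ) * (m - τ))) * ProbabilityTheory.mgf S P t := hcher
      _ ≤ Real.exp (-t * ((M : ℝ) * (m - τ))) *
          Real.exp (t * m + t ^ 2 * U ^ 2 / 8) ^ M :=
          mul_le_mul_of_nonneg_left hmgf_le (Real.exp_pos _).le
      _ = Real.exp (-t * ((M : ℝ) * (m - τ)) + (M : ℝ) * (t * m + t ^ 2 * U ^ 2 / 8)) := by
          rw [← Real.exp_nat_mul, ← Real.exp_add]
      _ = Real.exp (-(2 * (M : ℝ) * τ ^ 2 / U ^ 2)) := by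
          congr 1
          rw [ht_def]
          field_simp
          ring
  -- numeric bound : exp(-2Mτ²/U²) ≤ (1-l)δ₂
  have hld_pos : 0 < (1 - l) * δ₂ := mul_pos (by linarith [hl.2]) hδ₂.1
  have hnum : Real.exp (-(2 * (M : ℝ) * τ ^ 2 / U ^ 2)) ≤ (1 - l) * δ₂ := by
    rw [← Real.exp_log hld_pos]
    refine Real.exp_le_exp.mpr ?_
    rw [one_div, Real.log_inv] at hMbound
    have h2 : (0:ℝ) < 2 * τ ^ 2 / U ^ 2 := by positivity
    have := mul_le_mul_of_nonneg_right hMbound h2.le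
    have heq : U ^ 2 / (2 * τ ^ 2) * -Real.log ((1 - l) * δ₂) * (2 * τ ^ 2 / U ^ 2) =
        -Real.log ((1 - l) * δ₂) := by
      field_simp
    rw [heq] at this
    have heq2 : (M:ℝ) * (2 * τ ^ 2 / U ^ 2) = 2 * (M:ℝ) * τ ^ 2 / U ^ 2 := by ring
    linarith
  -- event inclusion
  have hsub : {d : Fin M → D | (1 / (M : ℝ)) * ∑ j, g (d j) ≤ c - τ} ⊆
      {ω | S ω ≤ (M : ℝ) * (m - τ)} := by
    intro d hd
    simp only [Set.mem_setOf_eq] at hd ⊢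
    show (∑ j, g (d j)) ≤ (M : ℝ) * (m - τ)
    have h1 : (1 / (M : ℝ)) * ∑ j, g (d j) ≤ c - τ := hd
    have h2 := mul_le_mul_of_nonneg_left h1 hMpos.le
    have h3 : (M:ℝ) * ((1/(M:ℝ)) * ∑ j, g (d j)) = ∑ j, g (d j) := by field_simp
    have h4 := mul_le_mul_of_nonneg_left (by linarith : c - τ ≤ m - τ) hMpos.le
    linarith
  -- lower bound on the measure
  have hlb : 1 - l * δ₂ ≤ (P {ω | S ω ≤ (M : ℝ) * (m - τ)}).toReal := by
    have h1 : ENNReal.ofReal (1 - l * δ₂) ≤ P {ω | S ω ≤ (M : ℝ) * (m - τ)} :=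
      le_trans hemp (measure_mono hsub)
    have h2 := ENNReal.toReal_mono (measure_ne_top P _) h1
    rwa [ENNReal.toReal_ofReal (by nlinarith [hl.1, hl.2, hδ₂.1, hδ₂.2])] at h2
  nlinarith [hlb.trans (hchain.trans hnum), hl.1, hl.2, hδ₂.1, hδ₂.2]
end

section
/- Let (X, 𝒳, P_x) and (D, 𝒟, P_d) be probability spaces and let V ⊆ X × D be measurable with respect to the product σ-algebra. Let M ≥ 1 be an integer and α₁, α₂, l, δ₂ ∈ (0,1) with α₁ < l·δ₂ and M ≥ (1/(2·α₂²))·ln(1/((1−l)·δ₂)). If (P_x ⊗ P_d^M){(x, d₁,…,d_M) : (x, d_j) ∈ V for some j ∈ {1,…,M}} ≤ α₁, then P_x{x ∈ X : P_d({d ∈ D : (x,d) ∈ V}) ≤ α₂} ≥ 1 − α₁/(l·δ₂). -/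
open MeasureTheory

lemma log_one_sub_le_neg_two_sq (x : ℝ) (hx0 : 0 < x) (hx1 : x < 1) :
    Real.log (1 - x) ≤ -2 * x ^ 2 := by
  set f : ℝ → ℝ := fun y => 2 * y ^ 2 + Real.log (1 - y) with hf
  have hder : ∀ y ∈ Set.Ioo (0:ℝ) x, HasDerivAt f (4 * y - 1 / (1 - y)) y := by
    intro y hy
    have h1 : (1 : ℝ) - y ≠ 0 := by
      have : y < 1 := lt_trans hy.2 hx1
      linarith
    have hlog : HasDerivAt (fun y : ℝ => Real.log (1 - y)) (-1 / (1 - y)) y := by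
      have h2 : HasDerivAt (fun y : ℝ => 1 - y) (-1) y := by
        simpa using (hasDerivAt_id y).const_sub 1
      simpa using h2.log h1
    have hsq : HasDerivAt (fun y : ℝ => 2 * y ^ 2) (4 * y) y := by
      have := (hasDerivAt_pow 2 y).const_mul (2:ℝ)
      exact this.congr_deriv (by ring)
    have := hsq.add hlog
    exact this.congr_deriv (by ring)
  have hcont : ContinuousOn f (Set.Icc 0 x) := by
    apply ContinuousOn.add
    · fun_prop
    · apply ContinuousOn.log
      · fun_prop
      · intro y hy
        have : y < 1 := lt_of_le_of_lt hy.2 hx1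
        intro h; linarith [h]
  have hanti : AntitoneOn f (Set.Icc 0 x) := by
    apply antitoneOn_of_deriv_nonpos (convex_Icc 0 x) hcont
    · intro y hy
      rw [interior_Icc] at hy
      exact (hder y hy).differentiableAt.differentiableWithinAt
    · intro y hy
      rw [interior_Icc] at hy
      rw [(hder y hy).deriv]
      have hy1 : y < 1 := lt_trans hy.2 hx1
      have h1 : 0 < 1 - y := by linarith
      rw [sub_nonpos, le_div_iff₀ h1]
      nlinarith [sq_nonneg (2*y - 1)]
  have h0 : (0:ℝ) ∈ Set.Icc (0:ℝ) x := by constructor <;> linarith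
  have hx : x ∈ Set.Icc (0:ℝ) x := by constructor <;> linarith
  have := hanti h0 hx (le_of_lt hx0)
  simp [hf] at this
  linarith

/-- One-to-many sampling bound: if the probability (under `P_x ⊗ P_d^M`) that some of
the `M` disturbance draws violates at state `x` is at most `α₁`, and `M` meets the
Hoeffding bound, then for at least a `1 − α₁/(l·δ₂)` fraction of states the slice
violation probability is at most `α₂`. -/
theorem pac_one_to_many_slice_bound {X D : Type*} [MeasurableSpace X] [MeasurableSpace D]
    (Px : Measure X) (Pd : Measure D)
    [IsProbabilityMeasure Px] [IsProbabilityMeasure Pd]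
    (V : Set (X × D)) (hV : MeasurableSet V)
    (M : ℕ) (hM : 1 ≤ M)
    (α₁ α₂ l δ₂ : ℝ)
    (hα₁ : α₁ ∈ Set.Ioo (0 : ℝ) 1) (hα₂ : α₂ ∈ Set.Ioo (0 : ℝ) 1)
    (hl : l ∈ Set.Ioo (0 : ℝ) 1) (hδ₂ : δ₂ ∈ Set.Ioo (0 : ℝ) 1)
    (hlt : α₁ < l * δ₂)
    (hMbound : (M : ℝ) ≥ (1 / (2 * α₂ ^ 2)) * Real.log (1 / ((1 - l) * δ₂)))
    (hjoint : (Px.prod (Measure.pi fun _ : Fin M => Pd))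
        {p : X × (Fin M → D) | ∃ j, (p.1, p.2 j) ∈ V} ≤ ENNReal.ofReal α₁) :
    Px {x | Pd {d | (x, d) ∈ V} ≤ ENNReal.ofReal α₂} ≥
      ENNReal.ofReal (1 - α₁ / (l * δ₂)) := by
  obtain ⟨hα₁0, hα₁1⟩ := hα₁
  obtain ⟨hα₂0, hα₂1⟩ := hα₂
  obtain ⟨hl0, hl1⟩ := hl
  obtain ⟨hδ₂0, hδ₂1⟩ := hδ₂
  set Q : Measure (Fin M → D) := Measure.pi fun _ : Fin M => Pd with hQ
  have hld : 0 < l * δ₂ := mul_pos hl0 hδ₂0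
  have hlδ : 0 < (1 - l) * δ₂ := mul_pos (by linarith) hδ₂0
  -- Step 1: real inequality (1 - α₂)^M ≤ (1 - l) * δ₂
  have hpow : (1 - α₂) ^ M ≤ (1 - l) * δ₂ := by
    have hpos : (0:ℝ) < (1 - α₂) ^ M := pow_pos (by linarith) M
    rw [← Real.log_le_log_iff hpos hlδ, Real.log_pow]
    have hlog2 : Real.log (1 - α₂) ≤ -2 * α₂ ^ 2 := log_one_sub_le_neg_two_sq α₂ hα₂0 hα₂1
    have hM2 : (M : ℝ) * (2 * α₂ ^ 2) ≥ Real.log (1 / ((1 - l) * δ₂)) := by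
      have h2 : (0:ℝ) < 2 * α₂ ^ 2 := by positivity
      calc Real.log (1 / ((1 - l) * δ₂)) = (1 / (2 * α₂ ^ 2)) * Real.log (1 / ((1 - l) * δ₂)) * (2 * α₂ ^ 2) := by
            field_simp
        _ ≤ (M : ℝ) * (2 * α₂ ^ 2) := by
            apply mul_le_mul_of_nonneg_right hMbound (le_of_lt h2)
    rw [one_div, Real.log_inv] at hM2
    have hMpos : (0:ℝ) ≤ (M:ℝ) := Nat.cast_nonneg M
    calc (M : ℝ) * Real.log (1 - α₂) ≤ (M:ℝ) * (-2 * α₂ ^ 2) :=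
          mul_le_mul_of_nonneg_left hlog2 hMpos
      _ ≤ Real.log ((1 - l) * δ₂) := by nlinarith
  -- slice violation probability
  set p : X → ENNReal := fun x => Pd {d | (x, d) ∈ V} with hp
  have hpmeas : Measurable p := measurable_measure_prodMk_left hV
  set G : Set X := {x | p x ≤ ENNReal.ofReal α₂} with hG
  have hGmeas : MeasurableSet G := hpmeas measurableSet_Iic
  set B : Set X := Gᶜ with hB
  have hBmeas : MeasurableSet B := hGmeas.compl
  -- Step 2: for x in B, the Q-measure of the violation slice is ≥ l δ₂
  set E : Set (X × (Fin M → D)) := {q : X × (Fin M → D) | ∃ j, (q.1, q.2 j) ∈ V} with hE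
  have hEmeas : MeasurableSet E := by
    have : E = ⋃ j : Fin M, (fun q : X × (Fin M → D) => (q.1, q.2 j)) ⁻¹' V := by
      ext q; simp [hE]
    rw [this]
    exact MeasurableSet.iUnion fun j =>
      (measurable_fst.prodMk ((measurable_pi_apply j).comp measurable_snd)) hV
  have hslice : ∀ x ∈ B, ENNReal.ofReal (l * δ₂) ≤ Q (Prod.mk x ⁻¹' E) := by
    intro x hx
    have hxB : ENNReal.ofReal α₂ < p x := by
      simpa [hB, hG] using hx
    have hcompl : (Prod.mk x ⁻¹' E)ᶜ = Set.pi Set.univ (fun _ : Fin M => {d | (x, d) ∈ V}ᶜ) := by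
      ext d; simp [hE, Set.mem_pi]
    have hsliceMeas : MeasurableSet {d | (x, d) ∈ V} := measurable_prodMk_left hV
    have hQc : Q (Prod.mk x ⁻¹' E)ᶜ = (1 - p x) ^ M := by
      rw [hcompl, hQ, Measure.pi_pi]
      simp [measure_compl hsliceMeas (measure_ne_top Pd _), hp]
    have hEslice : MeasurableSet (Prod.mk x ⁻¹' E) := measurable_prodMk_left hEmeas
    have h1 : (1 - p x) ≤ ENNReal.ofReal (1 - α₂) := by
      have : ENNReal.ofReal (1 - α₂) = 1 - ENNReal.ofReal α₂ := by
        rw [ENNReal.ofReal_sub _ (le_of_lt hα₂0), ENNReal.ofReal_one]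
      rw [this]
      exact tsub_le_tsub_left (le_of_lt hxB) 1
    have h2 : Q (Prod.mk x ⁻¹' E)ᶜ ≤ ENNReal.ofReal ((1 - α₂) ^ M) := by
      rw [hQc, ENNReal.ofReal_pow (by linarith : (0:ℝ) ≤ 1 - α₂)]
      exact pow_le_pow_left' h1 M
    have h3 : Q (Prod.mk x ⁻¹' E) = 1 - Q (Prod.mk x ⁻¹' E)ᶜ := by
      rw [prob_compl_eq_one_sub hEslice,
        ENNReal.sub_sub_cancel ENNReal.one_ne_top prob_le_one]
    rw [h3]
    apply ENNReal.le_sub_of_add_le_right (measure_ne_top Q _)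
    calc ENNReal.ofReal (l * δ₂) + Q (Prod.mk x ⁻¹' E)ᶜ
        ≤ ENNReal.ofReal (l * δ₂) + ENNReal.ofReal ((1 - α₂) ^ M) := by
          exact add_le_add_right h2 _
      _ = ENNReal.ofReal (l * δ₂ + (1 - α₂) ^ M) := by
          rw [ENNReal.ofReal_add (le_of_lt hld) (le_of_lt (pow_pos (by linarith) M))]
      _ ≤ 1 := by
          rw [← ENNReal.ofReal_one]
          apply ENNReal.ofReal_le_ofReal
          nlinarith
  -- Step 3: l δ₂ * Px B ≤ α₁
  have hkey : ENNReal.ofReal (l * δ₂) * Px B ≤ ENNReal.ofReal α₁ := by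
    have hprod : (Px.prod Q) E = ∫⁻ x, Q (Prod.mk x ⁻¹' E) ∂Px :=
      Measure.prod_apply hEmeas
    have hlow : ENNReal.ofReal (l * δ₂) * Px B ≤ ∫⁻ x, Q (Prod.mk x ⁻¹' E) ∂Px := by
      have hind : ∫⁻ x, B.indicator (fun _ => ENNReal.ofReal (l * δ₂)) x ∂Px
          = ENNReal.ofReal (l * δ₂) * Px B := by
        rw [lintegral_indicator hBmeas]
        simp [mul_comm]
      rw [← hind]
      apply lintegral_mono
      intro x
      by_cases hx : x ∈ B
      · rw [Set.indicator_of_mem hx]; exact hslice x hx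
      · rw [Set.indicator_of_notMem hx]; exact zero_le
    exact le_trans hlow (le_trans (le_of_eq hprod.symm) hjoint)
  -- Step 4: conclude
  have hPxB : Px B ≤ ENNReal.ofReal (α₁ / (l * δ₂)) := by
    rw [ENNReal.ofReal_div_of_pos hld, ENNReal.le_div_iff_mul_le
      (Or.inl (by simp [ENNReal.ofReal_eq_zero]; linarith)) (Or.inl ENNReal.ofReal_ne_top)]
    rw [mul_comm] at hkey
    exact hkey
  have hPxG : Px G = 1 - Px B := by
    rw [hB, prob_compl_eq_one_sub hGmeas,
      ENNReal.sub_sub_cancel ENNReal.one_ne_top prob_le_one]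
  rw [hPxG]
  apply ENNReal.le_sub_of_add_le_right (measure_ne_top Px _)
  have ht1 : α₁ / (l * δ₂) ≤ 1 := by
    rw [div_le_one hld]; linarith
  calc ENNReal.ofReal (1 - α₁ / (l * δ₂)) + Px B
      ≤ ENNReal.ofReal (1 - α₁ / (l * δ₂)) + ENNReal.ofReal (α₁ / (l * δ₂)) :=
        add_le_add_right hPxB _
    _ = 1 := by
        rw [← ENNReal.ofReal_add (by linarith) (by positivity)]
        norm_num
end

section
/- Let X ⊆ ℝⁿ be a Borel set, P_x a probability measure on X, (D, 𝒟, P_d) a probability space, and f : X × D → ℝⁿ measurable with respect to the product σ-algebra. Let γ ∈ (0,1) and let h : ℝⁿ → ℝ be Borel measurable with h(y) ≥ 0 for all y ∈ X and h(y) < 0 for all y ∈ ℝⁿ \ X. Let M ≥ 1 be an integer and α₁, α₂, l, δ₂ ∈ (0,1) with α₁ < l·δ₂ and M ≥ (1/(2·α₂²))·ln(1/((1−l)·δ₂)). If (P_x ⊗ P_d^M){(x, d₁,…,d_M) : h(f(x, d_j)) < γ·h(x) for some j ∈ {1,…,M}} ≤ α₁, then P_x{x ∈ X : P_d({d ∈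 D : f(x,d) ∈ X}) ≥ 1 − α₂} ≥ 1 − α₁/(l·δ₂). -/
open MeasureTheory

lemma aux_exp {t : ℝ} (ht0 : 0 < t) (ht1 : t < 1) : 1 - t ≤ Real.exp (-(2 * t ^ 2)) := by
  rcases le_or_gt t (1/2) with hle | hgt
  · have h1 := Real.add_one_le_exp (-(2 * t ^ 2))
    nlinarith
  · have hs0 : 0 < 1 - t := by linarith
    have hx : -(2 * t ^ 2) = (4 * (1-t) - 2 * (1-t) ^ 2) - 2 := by ring
    rw [hx, Real.exp_sub, le_div_iff₀ (Real.exp_pos 2)]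
    set s : ℝ := 1 - t with hs
    have hs2 : s < 1/2 := by rw [hs]; linarith
    have hxnn : (0:ℝ) ≤ 4 * s - 2 * s ^ 2 := by nlinarith
    have hser := Real.sum_le_exp_of_nonneg hxnn 4
    have hsum : ∑ i ∈ Finset.range 4, (4*s-2*s^2) ^ i / (Nat.factorial i : ℝ)
        = 1 + (4*s - 2*s^2) + (4*s-2*s^2)^2/2 + (4*s-2*s^2)^3/6 := by
      simp [Finset.sum_range_succ, Nat.factorial]
    rw [hsum] at hser
    have he : Real.exp 2 ≤ 7.3890560997 := by
      have h1 : Real.exp 1 < 2.7182818286 := Real.exp_one_lt_d9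
      have h2 : Real.exp 2 = Real.exp 1 * Real.exp 1 := by
        rw [← Real.exp_add]; norm_num
      have h3 : Real.exp 1 * Real.exp 1 ≤ 2.7182818286 * 2.7182818286 :=
        mul_le_mul h1.le h1.le (Real.exp_pos 1).le (by norm_num)
      rw [h2]; linarith [show (2.7182818286:ℝ) * 2.7182818286 ≤ 7.3890560997 by norm_num]
    have key : s * 7.3890560997 ≤ 1 + (4*s - 2*s^2) + (4*s-2*s^2)^2/2 + (4*s-2*s^2)^3/6 := by
      nlinarith [sq_nonneg s, sq_nonneg (s - 1/2), sq_nonneg (s*(s-1/2)), sq_nonneg (s*s)]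
    calc s * Real.exp 2 ≤ s * 7.3890560997 := by
          exact mul_le_mul_of_nonneg_left he (le_of_lt hs0)
      _ ≤ _ := le_trans key hser

lemma aux_pow {α₂ l δ₂ : ℝ} {M : ℕ}
    (hα₂ : α₂ ∈ Set.Ioo (0:ℝ) 1) (hl : l ∈ Set.Ioo (0:ℝ) 1) (hδ₂ : δ₂ ∈ Set.Ioo (0:ℝ) 1)
    (hMbound : (M : ℝ) ≥ (1 / (2 * α₂ ^ 2)) * Real.log (1 / ((1 - l) * δ₂))) :
    (1 - α₂) ^ M ≤ (1 - l) * δ₂ := by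
  obtain ⟨ha0, ha1⟩ := hα₂
  obtain ⟨hl0, hl1⟩ := hl
  obtain ⟨hd0, hd1⟩ := hδ₂
  have hy : (0:ℝ) < (1 - l) * δ₂ := mul_pos (by linarith) hd0
  have h1 : (1 - α₂) ^ M ≤ (Real.exp (-(2 * α₂ ^ 2))) ^ M :=
    pow_le_pow_left₀ (by linarith) (aux_exp ha0 ha1) M
  have h2 : (Real.exp (-(2 * α₂ ^ 2))) ^ M = Real.exp ((M:ℝ) * (-(2 * α₂ ^ 2))) := by
    rw [Real.exp_nat_mul]
  have hsq : (0:ℝ) < 2 * α₂ ^ 2 := by positivity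
  have h3 : Real.log (1 / ((1 - l) * δ₂)) ≤ (M:ℝ) * (2 * α₂ ^ 2) := by
    have := mul_le_mul_of_nonneg_right hMbound hsq.le
    calc Real.log (1 / ((1 - l) * δ₂))
        = 1 / (2 * α₂ ^ 2) * Real.log (1 / ((1 - l) * δ₂)) * (2 * α₂ ^ 2) := by
          field_simp
      _ ≤ (M:ℝ) * (2 * α₂ ^ 2) := this
  have h4 : (M:ℝ) * (-(2 * α₂ ^ 2)) ≤ -Real.log (1 / ((1 - l) * δ₂)) := by linarith
  calc (1 - α₂) ^ M ≤ Real.exp ((M:ℝ) * (-(2 * α₂ ^ 2))) := h2 ▸ h1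
    _ ≤ Real.exp (-Real.log (1 / ((1 - l) * δ₂))) := Real.exp_le_exp.2 h4
    _ = (1 - l) * δ₂ := by
        rw [one_div, Real.log_inv, neg_neg, Real.exp_log hy]

/-- PAC safety certification II (barrier form, one-to-many samples): if the probability
(under `P_x ⊗ P_d^M`) that the barrier decrease condition fails for some of the `M`
disturbance draws is at most `α₁`, and `M` meets the Hoeffding bound, then for at least
a `1 − α₁/(l·δ₂)` fraction of states `x ∈ X` the one-step safety probability is at
least `1 − α₂`. -/
theorem pac_one_step_safety_II {n : ℕ} {D : Type*} [MeasurableSpace D]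
    (X : Set (Fin n → ℝ)) (hX : MeasurableSet X)
    (Px : Measure ↥X) (Pd : Measure D)
    [IsProbabilityMeasure Px] [IsProbabilityMeasure Pd]
    (f : ↥X × D → (Fin n → ℝ)) (hf : Measurable f)
    (γ : ℝ) (hγ : γ ∈ Set.Ioo (0 : ℝ) 1)
    (h : (Fin n → ℝ) → ℝ) (hh : Measurable h)
    (hpos : ∀ y ∈ X, 0 ≤ h y) (hneg : ∀ y, y ∉ X → h y < 0)
    (M : ℕ) (hM : 1 ≤ M)
    (α₁ α₂ l δ₂ : ℝ)
    (hα₁ : α₁ ∈ Set.Ioo (0 : ℝ) 1) (hα₂ : α₂ ∈ Set.Ioo (0 : ℝ) 1)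
    (hl : l ∈ Set.Ioo (0 : ℝ) 1) (hδ₂ : δ₂ ∈ Set.Ioo (0 : ℝ) 1)
    (hlt : α₁ < l * δ₂)
    (hMbound : (M : ℝ) ≥ (1 / (2 * α₂ ^ 2)) * Real.log (1 / ((1 - l) * δ₂)))
    (hjoint : (Px.prod (Measure.pi fun _ : Fin M => Pd))
        {p : ↥X × (Fin M → D) | ∃ j, h (f (p.1, p.2 j)) < γ * h ↑p.1} ≤
      ENNReal.ofReal α₁) :
    Px {x : ↥X | Pd {d | f (x, d) ∈ X} ≥ ENNReal.ofReal (1 - α₂)} ≥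
      ENNReal.ofReal (1 - α₁ / (l * δ₂)) := by
  obtain ⟨hγ0, hγ1⟩ := hγ
  obtain ⟨ha10, ha11⟩ := hα₁
  obtain ⟨ha20, ha21⟩ := hα₂
  obtain ⟨hl0, hl1⟩ := hl
  obtain ⟨hd0, hd1⟩ := hδ₂
  have hld : (0:ℝ) < l * δ₂ := mul_pos hl0 hd0
  set PdM : Measure (Fin M → D) := Measure.pi fun _ : Fin M => Pd with hPdM
  haveI : IsProbabilityMeasure PdM := by rw [hPdM]; infer_instance
  -- the bad set in the product space
  set A : Set (↥X × (Fin M → D)) :=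
    {p | ∃ j, h (f (p.1, p.2 j)) < γ * h ↑p.1} with hA
  have hbad1 : MeasurableSet {p : ↥X × D | h (f p) < γ * h ↑p.1} := by
    apply measurableSet_lt (hh.comp hf)
    exact (measurable_const.mul ((hh.comp measurable_subtype_coe).comp measurable_fst))
  have hAm : MeasurableSet A := by
    have : A = ⋃ j : Fin M, (fun p : ↥X × (Fin M → D) => (p.1, p.2 j)) ⁻¹'
        {p : ↥X × D | h (f p) < γ * h ↑p.1} := by
      ext p; simp [hA]
    rw [this]
    exact MeasurableSet.iUnion fun j =>
      (measurable_fst.prodMk ((measurable_pi_apply j).comp measurable_snd)) hbad1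
  -- sections
  set q : ↥X → ENNReal := fun x => PdM (Prod.mk x ⁻¹' A) with hq
  have hqm : Measurable q := measurable_measure_prodMk_left hAm
  have hprod : (Px.prod PdM) A = ∫⁻ x, q x ∂Px := Measure.prod_apply hAm
  -- Markov
  set S : Set ↥X := {x | ENNReal.ofReal (l * δ₂) ≤ q x} with hS
  have hSm : MeasurableSet S := hqm measurableSet_Ici
  have hmarkov : ENNReal.ofReal (l * δ₂) * Px S ≤ ENNReal.ofReal α₁ := by
    calc ENNReal.ofReal (l * δ₂) * Px S
        ≤ ∫⁻ x, q x ∂Px := mul_meas_ge_le_lintegral₀ hqm.aemeasurable _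
      _ = (Px.prod PdM) A := hprod.symm
      _ ≤ ENNReal.ofReal α₁ := hjoint
  have hPxS : Px S ≤ ENNReal.ofReal (α₁ / (l * δ₂)) := by
    rw [ENNReal.ofReal_div_of_pos hld]
    rw [ENNReal.le_div_iff_mul_le (Or.inl (by simp [ENNReal.ofReal_eq_zero]; linarith))
      (Or.inl ENNReal.ofReal_ne_top)]
    rw [mul_comm]; exact hmarkov
  -- pointwise: complement of S is in the goal set
  have hsub : Sᶜ ⊆ {x : ↥X | Pd {d | f (x, d) ∈ X} ≥ ENNReal.ofReal (1 - α₂)} := by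
    intro x hx
    simp only [hS, Set.mem_compl_iff, Set.mem_setOf_eq, not_le] at hx
    set B : Set D := {d | h (f (x, d)) < γ * h ↑x} with hB
    have hBm : MeasurableSet B :=
      measurableSet_lt ((hh.comp hf).comp (measurable_prodMk_left)) measurable_const
    -- Bᶜ ⊆ {d | f (x,d) ∈ X}
    have hBsub : Bᶜ ⊆ {d | f (x, d) ∈ X} := by
      intro d hd
      simp only [hB, Set.mem_compl_iff, Set.mem_setOf_eq, not_lt] at hd
      by_contra hout
      have := hneg _ hout
      have hx' : 0 ≤ h ↑x := hpos _ x.2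
      nlinarith
    -- section of A at x
    have hsec : Prod.mk x ⁻¹' A = {ω : Fin M → D | ∃ j, ω j ∈ B} := rfl
    have hcompl : (Prod.mk x ⁻¹' A)ᶜ = Set.pi Set.univ (fun _ : Fin M => Bᶜ) := by
      ext ω; simp [hsec, hB]
    have hpi : PdM ((Prod.mk x ⁻¹' A)ᶜ) = (Pd Bᶜ) ^ M := by
      rw [hcompl, hPdM, Measure.pi_pi]
      simp
    have hAx : MeasurableSet (Prod.mk x ⁻¹' A) := measurable_prodMk_left hAm
    have h1 : PdM ((Prod.mk x ⁻¹' A)ᶜ) = 1 - PdM (Prod.mk x ⁻¹' A) :=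
      prob_compl_eq_one_sub hAx
    have hqx : q x = 1 - (Pd Bᶜ) ^ M := by
      rw [hq, ← hpi, h1, ENNReal.sub_sub_cancel ENNReal.one_ne_top prob_le_one]
    -- key: Pd Bᶜ ≥ ofReal (1 - α₂)
    have hkey : ENNReal.ofReal (1 - α₂) ≤ Pd Bᶜ := by
      by_contra hcon
      push_neg at hcon
      have hpow : (Pd Bᶜ) ^ M ≤ ENNReal.ofReal ((1 - l) * δ₂) := by
        calc (Pd Bᶜ) ^ M ≤ (ENNReal.ofReal (1 - α₂)) ^ M := pow_le_pow_left' hcon.le M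
          _ = ENNReal.ofReal ((1 - α₂) ^ M) := by
              rw [ENNReal.ofReal_pow (by linarith)]
          _ ≤ ENNReal.ofReal ((1 - l) * δ₂) :=
              ENNReal.ofReal_le_ofReal (aux_pow ⟨ha20, ha21⟩ ⟨hl0, hl1⟩ ⟨hd0, hd1⟩ hMbound)
      have hqge : ENNReal.ofReal (l * δ₂) ≤ q x := by
        rw [hqx]
        calc ENNReal.ofReal (l * δ₂) ≤ 1 - ENNReal.ofReal ((1 - l) * δ₂) := by
              rw [← ENNReal.ofReal_one, ← ENNReal.ofReal_sub _ (by nlinarith)]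
              exact ENNReal.ofReal_le_ofReal (by nlinarith)
          _ ≤ 1 - (Pd Bᶜ) ^ M := tsub_le_tsub_left hpow 1
      exact absurd hqge (not_le.2 hx)
    exact le_trans hkey (measure_mono hBsub)
  -- conclude
  calc ENNReal.ofReal (1 - α₁ / (l * δ₂))
      ≤ Px Sᶜ := by
        rw [prob_compl_eq_one_sub hSm]
        calc ENNReal.ofReal (1 - α₁ / (l * δ₂))
            = 1 - ENNReal.ofReal (α₁ / (l * δ₂)) := by
              rw [← ENNReal.ofReal_one, ← ENNReal.ofReal_sub _ (by positivity)]
          _ ≤ 1 - Px S := tsub_le_tsub_left hPxS 1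
    _ ≤ _ := measure_mono hsub
end

section
/- Let (Ω, ℱ, P_S), (X, 𝒳, P_x), and (D, 𝒟, P_d) be probability spaces and let V ⊆ Ω × X × D be measurable with respect to the product σ-algebra. Let M ≥ 1 be an integer and α₁, α₂, l, δ₁, δ₂ ∈ (0,1) with α₁ < l·δ₂ and M ≥ (1/(2·α₂²))·ln(1/((1−l)·δ₂)). If P_S{ω ∈ Ω : (P_x ⊗ P_d^M)({(x, d₁,…,d_M) : (ω, x, d_j) ∈ V for some j ∈ {1,…,M}}) ≤ α₁} ≥ 1 − δ₁, then P_S{ω ∈ Ω : P_x({x ∈ X : P_d({d : (ω,x,d) ∈ V}) ≤ α₂}) ≥ 1 − α₁/(l·δ₂)} ≥ 1 − δ₁. -/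
open MeasureTheory

private lemma log_one_sub_le_neg_two_sq' {a : ℝ} (h0 : 0 ≤ a) (h1 : a < 1) :
    Real.log (1 - a) ≤ -(2 * a ^ 2) := by
  rcases eq_or_lt_of_le h0 with h | h
  · simp [← h]
  set f : ℝ → ℝ := fun x => Real.log (1 - x) + 2 * x ^ 2 with hf
  have hder : ∀ x ∈ Set.Ioo (0:ℝ) a, HasDerivAt f (-(1 - x)⁻¹ + 4 * x) x := by
    intro x hx
    have hx1 : (1 : ℝ) - x ≠ 0 := by
      have := hx.2; intro hc; nlinarith
    have h₁ : HasDerivAt (fun x : ℝ => 1 - x) (-1) x := by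
      exact (hasDerivAt_id' x).const_sub (1:ℝ)
    have h₂ : HasDerivAt (fun x : ℝ => Real.log (1 - x)) ((1-x)⁻¹ * (-1)) x :=
      (Real.hasDerivAt_log hx1).comp x h₁
    have h₃ : HasDerivAt (fun x : ℝ => 2 * x ^ 2) (2 * (2 * x)) x := by
      simpa using ((hasDerivAt_pow 2 x).const_mul (2:ℝ))
    have := h₂.add h₃
    refine this.congr_deriv ?_
    ring
  have hcont : ContinuousOn f (Set.Icc 0 a) := by
    apply ContinuousOn.add
    · apply ContinuousOn.log
      · exact (continuous_const.sub continuous_id).continuousOn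
      · intro x hx
        have := hx.2
        intro hc; nlinarith
    · exact (continuous_const.mul (continuous_pow 2)).continuousOn
  have hint : interior (Set.Icc (0:ℝ) a) = Set.Ioo 0 a := interior_Icc
  have hanti : AntitoneOn f (Set.Icc 0 a) := by
    apply antitoneOn_of_deriv_nonpos (convex_Icc 0 a) hcont
    · intro x hx
      rw [hint] at hx
      exact (hder x hx).differentiableAt.differentiableWithinAt
    · intro x hx
      rw [hint] at hx
      rw [(hder x hx).deriv]
      have hpos : (0:ℝ) < 1 - x := by have := hx.2; linarith
      have h4 : 4 * x * (1 - x) ≤ 1 := by nlinarith [sq_nonneg (1 - 2*x)]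
      have : 4 * x ≤ (1 - x)⁻¹ := by
        rw [inv_eq_one_div, le_div_iff₀ hpos]; linarith
      linarith
  have hle := hanti (Set.left_mem_Icc.2 h0) (Set.right_mem_Icc.2 h0) h0
  have : f a ≤ f 0 := hle
  simp only [hf] at this
  simp at this
  linarith

private lemma key_real' (α l δ₂ : ℝ) (hα : α ∈ Set.Ioo (0:ℝ) 1) (hl : l ∈ Set.Ioo (0:ℝ) 1)
    (hδ : δ₂ ∈ Set.Ioo (0:ℝ) 1) (M : ℕ)
    (hM : (M:ℝ) ≥ (1 / (2 * α ^ 2)) * Real.log (1 / ((1 - l) * δ₂))) :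
    (1 - α) ^ M ≤ 1 - l * δ₂ := by
  set s : ℝ := (1 - l) * δ₂ with hs
  have hs0 : 0 < s := by
    apply mul_pos <;> [linarith [hl.2]; exact hδ.1]
  have hs1 : s ≤ 1 - l * δ₂ := by nlinarith [hl.1, hl.2, hδ.1, hδ.2]
  have hαpos := hα.1
  have hα2 : (0:ℝ) < 2 * α ^ 2 := by positivity
  have hlog : (M:ℝ) * (2 * α ^ 2) ≥ Real.log (1 / s) := by
    rw [ge_iff_le, ← div_le_iff₀ hα2] at *
    calc Real.log (1/s) / (2 * α^2) = (1 / (2 * α ^ 2)) * Real.log (1 / s) := by ring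
      _ ≤ (M:ℝ) := hM
  have hlogs : Real.log (1/s) = - Real.log s := by
    rw [one_div, Real.log_inv]
  have hps : (1 - α) ^ M ≤ s := by
    have h1α : (0:ℝ) < 1 - α := by linarith [hα.2]
    have hexp : (1 - α) ^ M = Real.exp ((M:ℝ) * Real.log (1 - α)) := by
      rw [Real.exp_nat_mul, Real.exp_log h1α]
    rw [hexp, ← Real.exp_log hs0]
    apply Real.exp_le_exp.2
    have hlub : Real.log (1 - α) ≤ -(2 * α ^ 2) :=
      log_one_sub_le_neg_two_sq' hα.1.le hα.2
    calc (M:ℝ) * Real.log (1 - α) ≤ (M:ℝ) * (-(2 * α ^ 2)) := by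
          apply mul_le_mul_of_nonneg_left hlub (Nat.cast_nonneg M)
      _ = -((M:ℝ) * (2 * α ^ 2)) := by ring
      _ ≤ Real.log s := by rw [hlogs] at hlog; linarith
  calc (1 - α) ^ M ≤ s := hps
    _ ≤ 1 - l * δ₂ := hs1

private lemma per_omega' {X D : Type*} [MeasurableSpace X] [MeasurableSpace D]
    (Px : Measure X) (Pd : Measure D)
    [IsProbabilityMeasure Px] [IsProbabilityMeasure Pd]
    {Ω : Type*} [MeasurableSpace Ω] (V : Set (Ω × X × D)) (hV : MeasurableSet V)
    (ω : Ω) (M : ℕ)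
    (α₁ α₂ l δ₂ : ℝ)
    (hα₁ : α₁ ∈ Set.Ioo (0:ℝ) 1) (hα₂ : α₂ ∈ Set.Ioo (0:ℝ) 1)
    (hl : l ∈ Set.Ioo (0:ℝ) 1) (hδ₂ : δ₂ ∈ Set.Ioo (0:ℝ) 1)
    (hlt : α₁ < l * δ₂)
    (hkey : (1 - α₂) ^ M ≤ 1 - l * δ₂)
    (h : (Px.prod (Measure.pi fun _ : Fin M => Pd))
        {p : X × (Fin M → D) | ∃ j, (ω, p.1, p.2 j) ∈ V} ≤ ENNReal.ofReal α₁) :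
    Px {x | Pd {d | (ω, x, d) ∈ V} ≤ ENNReal.ofReal α₂} ≥
      ENNReal.ofReal (1 - α₁ / (l * δ₂)) := by
  set Q : Measure (Fin M → D) := Measure.pi fun _ : Fin M => Pd with hQ
  set S : Set (X × (Fin M → D)) := {p | ∃ j, (ω, p.1, p.2 j) ∈ V} with hSdef
  -- measurability of S
  have hS : MeasurableSet S := by
    have : S = ⋃ j : Fin M, (fun p : X × (Fin M → D) => (ω, p.1, p.2 j)) ⁻¹' V := by
      ext p; simp [hSdef]
    rw [this]
    apply MeasurableSet.iUnion
    intro j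
    exact (measurable_const.prodMk
      (measurable_fst.prodMk ((measurable_pi_apply j).comp measurable_snd))) hV
  -- slice sets
  set T : X → Set D := fun x => {d | (ω, x, d) ∈ V} with hT
  have hVω : MeasurableSet {q : X × D | (ω, q.1, q.2) ∈ V} :=
    (measurable_const.prodMk (measurable_fst.prodMk measurable_snd)) hV
  have hTmeas : ∀ x, MeasurableSet (T x) := by
    intro x
    exact (measurable_const.prodMk (measurable_const.prodMk measurable_id)) hV
  have hfmeas : Measurable fun x => Pd (T x) :=
    measurable_measure_prodMk_left hVω
  set A : Set X := {x | ENNReal.ofReal α₂ < Pd (T x)} with hA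
  have hAmeas : MeasurableSet A := measurableSet_lt measurable_const hfmeas
  -- slice of S
  have hslice : ∀ x, Q (Prod.mk x ⁻¹' S) = 1 - (1 - Pd (T x)) ^ M := by
    intro x
    have hx : Prod.mk x ⁻¹' S = (Set.pi Set.univ fun _ : Fin M => (T x)ᶜ)ᶜ := by
      ext d
      simp [hSdef, hT, Set.mem_pi]
    rw [hx, measure_compl (MeasurableSet.univ_pi fun _ => (hTmeas x).compl)
        (measure_ne_top _ _)]
    have : Q (Set.pi Set.univ fun _ : Fin M => (T x)ᶜ) = (1 - Pd (T x)) ^ M := by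
      rw [hQ, Measure.pi_pi]
      rw [measure_compl (hTmeas x) (measure_ne_top _ _)]
      simp [measure_univ, Finset.prod_const]
    rw [this, measure_univ]
  -- lower bound
  have hlb : ENNReal.ofReal (l * δ₂) * Px A ≤ (Px.prod Q) S := by
    rw [Measure.prod_apply hS]
    have h1 : ENNReal.ofReal (l * δ₂) * Px A = ∫⁻ x in A, ENNReal.ofReal (l * δ₂) ∂Px := by
      rw [setLIntegral_const]
    rw [h1]
    calc ∫⁻ x in A, ENNReal.ofReal (l * δ₂) ∂Px
        ≤ ∫⁻ x in A, Q (Prod.mk x ⁻¹' S) ∂Px := by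
          apply setLIntegral_mono (measurable_measure_prodMk_left hS)
          intro x hx
          rw [hslice x]
          have hxA : ENNReal.ofReal α₂ < Pd (T x) := hx
          have h2 : (1 - Pd (T x)) ^ M ≤ (1 - ENNReal.ofReal α₂) ^ M :=
            pow_le_pow_left' (tsub_le_tsub_left hxA.le 1) M
          have h3 : (1 - ENNReal.ofReal α₂) ^ M = ENNReal.ofReal ((1 - α₂) ^ M) := by
            rw [← ENNReal.ofReal_one, ← ENNReal.ofReal_sub _ hα₂.1.le,
              ENNReal.ofReal_pow (by linarith [hα₂.2])]
          have h4 : (1 - Pd (T x)) ^ M ≤ ENNReal.ofReal (1 - l * δ₂) := by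
            refine le_trans h2 ?_
            rw [h3]
            exact ENNReal.ofReal_le_ofReal hkey
          have h5 : ENNReal.ofReal (l * δ₂) = 1 - ENNReal.ofReal (1 - l * δ₂) := by
            rw [← ENNReal.ofReal_one, ← ENNReal.ofReal_sub _ (by nlinarith [hl.1, hl.2, hδ₂.1, hδ₂.2] : (0:ℝ) ≤ 1 - l * δ₂)]
            norm_num
          rw [h5]
          exact tsub_le_tsub_left h4 1
      _ ≤ ∫⁻ x, Q (Prod.mk x ⁻¹' S) ∂Px := setLIntegral_le_lintegral _ _
  -- conclude Px A small
  have hld : (0:ℝ) < l * δ₂ := mul_pos hl.1 hδ₂.1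
  have hPxA : Px A ≤ ENNReal.ofReal (α₁ / (l * δ₂)) := by
    have h6 : ENNReal.ofReal (l * δ₂) * Px A ≤ ENNReal.ofReal α₁ := le_trans hlb h
    rw [ENNReal.ofReal_div_of_pos hld]
    rw [ENNReal.le_div_iff_mul_le (Or.inl (by simp [hld])) (Or.inl ENNReal.ofReal_ne_top)]
    rw [mul_comm]
    exact h6
  -- complement
  have hcompl : {x | Pd {d | (ω, x, d) ∈ V} ≤ ENNReal.ofReal α₂} = Aᶜ := by
    ext x; simp [hA, hT, not_lt]
  rw [hcompl, measure_compl hAmeas (measure_ne_top _ _), measure_univ]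
  have heq : ENNReal.ofReal (1 - α₁ / (l * δ₂)) = 1 - ENNReal.ofReal (α₁ / (l * δ₂)) := by
    rw [ENNReal.ofReal_sub _ (div_nonneg hα₁.1.le hld.le), ENNReal.ofReal_one]
  rw [heq]
  exact tsub_le_tsub_left hPxA 1

/-- Lifting the one-to-many slice bound through the sampling distribution: if, with
confidence `1 − δ₁` over the sample `ω`, the one-to-many joint violation probability is
at most `α₁`, and `M` meets the Hoeffding bound, then with the same confidence at least
a `1 − α₁/(l·δ₂)` fraction of states has slice violation probability at most `α₂`. -/
theorem pac_lift_one_to_many_bound {Ω X D : Type*}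
    [MeasurableSpace Ω] [MeasurableSpace X] [MeasurableSpace D]
    (PS : Measure Ω) (Px : Measure X) (Pd : Measure D)
    [IsProbabilityMeasure PS] [IsProbabilityMeasure Px] [IsProbabilityMeasure Pd]
    (V : Set (Ω × X × D)) (hV : MeasurableSet V)
    (M : ℕ) (hM : 1 ≤ M)
    (α₁ α₂ l δ₁ δ₂ : ℝ)
    (hα₁ : α₁ ∈ Set.Ioo (0 : ℝ) 1) (hα₂ : α₂ ∈ Set.Ioo (0 : ℝ) 1)
    (hl : l ∈ Set.Ioo (0 : ℝ) 1) (hδ₁ : δ₁ ∈ Set.Ioo (0 : ℝ) 1)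
    (hδ₂ : δ₂ ∈ Set.Ioo (0 : ℝ) 1)
    (hlt : α₁ < l * δ₂)
    (hMbound : (M : ℝ) ≥ (1 / (2 * α₂ ^ 2)) * Real.log (1 / ((1 - l) * δ₂)))
    (hconf : PS {ω | (Px.prod (Measure.pi fun _ : Fin M => Pd))
        {p : X × (Fin M → D) | ∃ j, (ω, p.1, p.2 j) ∈ V} ≤ ENNReal.ofReal α₁} ≥
      ENNReal.ofReal (1 - δ₁)) :
    PS {ω | Px {x | Pd {d | (ω, x, d) ∈ V} ≤ ENNReal.ofReal α₂} ≥
        ENNReal.ofReal (1 - α₁ / (l * δ₂))} ≥ ENNReal.ofReal (1 - δ₁) := by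
  have hkey : (1 - α₂) ^ M ≤ 1 - l * δ₂ := key_real' α₂ l δ₂ hα₂ hl hδ₂ M hMbound
  refine le_trans hconf (measure_mono ?_)
  intro ω hω
  exact per_omega' Px Pd V hV ω M α₁ α₂ l δ₂ hα₁ hα₂ hl hδ₂ hlt hkey hω
end

section
/- Let (X, 𝒳, P_x) and (D, 𝒟, P_d) be probability spaces, g : X × D → ℝ measurable with respect to the product σ-algebra with 0 ≤ g(x,d) ≤ U for all (x,d), where U > 0, and let c : X → ℝ be measurable. Let τ > 0, and let M ≥ 1 be an integer and α₁, l, δ₂ ∈ (0,1) with α₁ < l·δ₂ and M ≥ (U²/(2·τ²))·ln(1/((1−l)·δ₂)). If (P_x ⊗ P_d^M){(x, d₁,…,d_M) : (1/M)·Σ_{j=1}^M g(x, d_j) > c(x) − τ} ≤ α₁, then P_x{x ∈ X : ∫ g(x,d) dP_d(d) ≤ c(x)} ≥ 1 − α₁/(l·δ₂). -/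
open MeasureTheory

open Real ProbabilityTheory

section Analytic

variable {p : ℝ}

private lemma den_pos (hp0 : 0 ≤ p) (hp1 : p ≤ 1) (h : ℝ) : 0 < 1 - p + p * exp h := by
  rcases eq_or_lt_of_le hp0 with rfl | hp
  · simp
  · have := exp_pos h
    nlinarith

/-- derivative of the log-mgf-like function -/
private lemma hasDeriv_L (hp0 : 0 ≤ p) (hp1 : p ≤ 1) (h : ℝ) :
    HasDerivAt (fun h => -p * h + log (1 - p + p * exp h))
      (-p + p * exp h / (1 - p + p * exp h)) h := by
  have h1 : HasDerivAt (fun h : ℝ => 1 - p + p * exp h) (p * exp h) h := by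
    simpa using ((Real.hasDerivAt_exp h).const_mul p).const_add (1 - p)
  have h2 : HasDerivAt (fun h : ℝ => log (1 - p + p * exp h))
      (p * exp h / (1 - p + p * exp h)) h := h1.log (den_pos hp0 hp1 h).ne'
  simpa using ((hasDerivAt_id h).const_mul (-p)).fun_add h2

private lemma hasDeriv_L1 (hp0 : 0 ≤ p) (hp1 : p ≤ 1) (h : ℝ) :
    HasDerivAt (fun h => -p + p * exp h / (1 - p + p * exp h))
      ((p * exp h * (1 - p)) / (1 - p + p * exp h) ^ 2) h := by
  have h1 : HasDerivAt (fun h : ℝ => 1 - p + p * exp h) (p * exp h) h := by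
    simpa using ((Real.hasDerivAt_exp h).const_mul p).const_add (1 - p)
  have h0 : HasDerivAt (fun h : ℝ => p * exp h) (p * exp h) h :=
    (Real.hasDerivAt_exp h).const_mul p
  have h2 := h0.div h1 (den_pos hp0 hp1 h).ne'
  have : (p * exp h * (1 - p + p * exp h) - p * exp h * (p * exp h)) / (1 - p + p * exp h) ^ 2
      = (p * exp h * (1 - p)) / (1 - p + p * exp h) ^ 2 := by ring
  rw [this] at h2
  simpa using h2.const_add (-p)

private lemma L2_le (hp0 : 0 ≤ p) (hp1 : p ≤ 1) (h : ℝ) :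
    (p * exp h * (1 - p)) / (1 - p + p * exp h) ^ 2 ≤ 1 / 4 := by
  have hd := den_pos hp0 hp1 h
  rw [div_le_iff₀ (by positivity)]
  have he := exp_pos h
  nlinarith [sq_nonneg (1 - p - p * exp h)]

private lemma L1_le (hp0 : 0 ≤ p) (hp1 : p ≤ 1) {h : ℝ} (hh : 0 ≤ h) :
    -p + p * exp h / (1 - p + p * exp h) ≤ h / 4 := by
  set φ : ℝ → ℝ := fun h => h / 4 - (-p + p * exp h / (1 - p + p * exp h)) with hφ
  have hder : ∀ x : ℝ, HasDerivAt φ (1 / 4 - (p * exp x * (1 - p)) / (1 - p + p * exp x) ^ 2) x := by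
    intro x
    simpa [hφ] using ((hasDerivAt_id x).div_const 4).fun_sub (hasDeriv_L1 hp0 hp1 x)
  have hmono : MonotoneOn φ (Set.Ici (0:ℝ)) := by
    apply monotoneOn_of_deriv_nonneg (convex_Ici 0)
    · exact fun x _ => ((hder x).differentiableAt.continuousAt).continuousWithinAt
    · exact fun x _ => (hder x).differentiableAt.differentiableWithinAt
    · intro x _
      rw [(hder x).deriv]
      have := L2_le hp0 hp1 x
      linarith
  have h0 : φ 0 = 0 := by simp [hφ]
  have := hmono (Set.self_mem_Ici) hh hh
  rw [h0] at this
  simpa [hφ, sub_nonneg] using this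

private lemma L_le_of_nonneg (hp0 : 0 ≤ p) (hp1 : p ≤ 1) {h : ℝ} (hh : 0 ≤ h) :
    -p * h + log (1 - p + p * exp h) ≤ h ^ 2 / 8 := by
  set ψ : ℝ → ℝ := fun h => h ^ 2 / 8 - (-p * h + log (1 - p + p * exp h)) with hψ
  have hder : ∀ x : ℝ, HasDerivAt ψ (x / 4 - (-p + p * exp x / (1 - p + p * exp x))) x := by
    intro x
    have h1 : HasDerivAt (fun h : ℝ => h ^ 2 / 8) (x / 4) x := by
      have := ((hasDerivAt_pow 2 x).div_const 8)
      simpa [hψ] using this.congr_deriv (by ring)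
    simpa [hψ] using h1.fun_sub (hasDeriv_L hp0 hp1 x)
  have hmono : MonotoneOn ψ (Set.Ici (0:ℝ)) := by
    apply monotoneOn_of_deriv_nonneg (convex_Ici 0)
    · exact fun x _ => ((hder x).differentiableAt.continuousAt).continuousWithinAt
    · exact fun x _ => (hder x).differentiableAt.differentiableWithinAt
    · intro x hx
      rw [(hder x).deriv]
      have hx0 : (0:ℝ) ≤ x := le_of_lt (by simpa using hx)
      have := L1_le hp0 hp1 hx0
      linarith
  have h0 : ψ 0 = 0 := by simp [hψ]
  have := hmono (Set.self_mem_Ici) hh hh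
  rw [h0] at this
  simpa [hψ, sub_nonneg] using this

lemma L_le (hp0 : 0 ≤ p) (hp1 : p ≤ 1) (h : ℝ) :
    -p * h + log (1 - p + p * exp h) ≤ h ^ 2 / 8 := by
  rcases le_or_gt 0 h with hh | hh
  · exact L_le_of_nonneg hp0 hp1 hh
  · have hsymm : -p * h + log (1 - p + p * exp h)
        = -(1 - p) * (-h) + log (1 - (1 - p) + (1 - p) * exp (-h)) := by
    -- 1 - p + p e^h = e^h (p + (1-p) e^{-h})
      have key : 1 - p + p * exp h = exp h * (1 - (1 - p) + (1 - p) * exp (-h)) := by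
        rw [exp_neg]
        have := exp_pos h
        field_simp
        ring
      rw [key, log_mul (exp_pos h).ne' (den_pos (by linarith) (by linarith) (-h)).ne', log_exp]
      ring
    rw [hsymm]
    have := L_le_of_nonneg (p := 1 - p) (by linarith) (by linarith) (le_of_lt (by linarith : (0:ℝ) < -h))
    calc -(1 - p) * (-h) + log (1 - (1 - p) + (1 - p) * exp (-h)) ≤ (-h) ^ 2 / 8 := this
    _ = h ^ 2 / 8 := by ring

end Analytic


private lemma integrable_of_abs_le {Ω : Type*} [MeasurableSpace Ω] {μ : Measure Ω}
    [IsFiniteMeasure μ] {f : Ω → ℝ} (hf : Measurable f) (C : ℝ) (h : ∀ ω, |f ω| ≤ C) :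
    Integrable f μ :=
  (integrable_const C).mono' hf.aestronglyMeasurable (Filter.Eventually.of_forall fun ω => by
    simpa using h ω)

/-- Hoeffding's lemma. -/
lemma hoeffding_lemma {Ω : Type*} [MeasurableSpace Ω] (μ : Measure Ω) [IsProbabilityMeasure μ]
    (Y : Ω → ℝ) (hY : Measurable Y) (a b : ℝ) (hab : ∀ ω, Y ω ∈ Set.Icc a b)
    (hmean : ∫ ω, Y ω ∂μ = 0) (t : ℝ) :
    ∫ ω, exp (t * Y ω) ∂μ ≤ exp (t ^ 2 * (b - a) ^ 2 / 8) := by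
  have hYint : Integrable Y μ :=
    integrable_of_abs_le hY (max |a| |b|) fun ω => by
      rcases hab ω with ⟨h1, h2⟩
      refine abs_le.2 ⟨?_, ?_⟩
      · have : -max |a| |b| ≤ -|a| := by simp
        have h3 : -|a| ≤ a := neg_abs_le a
        linarith
      · have : |b| ≤ max |a| |b| := le_max_right _ _
        have h3 : b ≤ |b| := le_abs_self b
        linarith
  have ha0 : a ≤ 0 := by
    have : ∫ _ : Ω, a ∂μ ≤ ∫ ω, Y ω ∂μ :=
      integral_mono (integrable_const a) hYint fun ω => (hab ω).1
    simpa [hmean] using this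
  have hb0 : 0 ≤ b := by
    have : ∫ ω, Y ω ∂μ ≤ ∫ _ : Ω, b ∂μ :=
      integral_mono hYint (integrable_const b) fun ω => (hab ω).2
    simpa [hmean] using this
  rcases eq_or_lt_of_le (le_trans ha0 hb0) with hab' | hab'
  · have ha : a = 0 := le_antisymm ha0 (hab' ▸ hb0)
    have hb : b = 0 := hab' ▸ ha
    have : ∀ ω, Y ω = 0 := fun ω => le_antisymm (hb ▸ (hab ω).2) (ha ▸ (hab ω).1)
    simp only [this, mul_zero, exp_zero, integral_const, measure_univ, probReal_univ, ENNReal.toReal_one,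
      smul_eq_mul, mul_one]
    exact one_le_exp (by positivity)
  · have hba : 0 < b - a := by linarith
    -- pointwise convexity bound
    have hpt : ∀ ω, exp (t * Y ω) ≤
        (b - Y ω) / (b - a) * exp (t * a) + (Y ω - a) / (b - a) * exp (t * b) := by
      intro ω
      rcases hab ω with ⟨h1, h2⟩
      have hconv := convexOn_exp.2 (Set.mem_univ (t * a)) (Set.mem_univ (t * b))
        (show (0:ℝ) ≤ (b - Y ω) / (b - a) from div_nonneg (by linarith) hba.le)
        (show (0:ℝ) ≤ (Y ω - a) / (b - a) from div_nonneg (by linarith) hba.le)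
        (by field_simp; ring)
      simp only [smul_eq_mul] at hconv
      have harg : (b - Y ω) / (b - a) * (t * a) + (Y ω - a) / (b - a) * (t * b) = t * Y ω := by
        field_simp
        ring
      rw [harg] at hconv
      exact hconv
    -- integrate
    have hint1 : Integrable (fun ω => exp (t * Y ω)) μ := by
      refine integrable_of_abs_le (by fun_prop) (exp (|t| * max |a| |b|)) fun ω => ?_
      rw [abs_of_pos (exp_pos _)]
      apply exp_le_exp.2
      calc t * Y ω ≤ |t * Y ω| := le_abs_self _
      _ = |t| * |Y ω| := abs_mul _ _
      _ ≤ |t| * max |a| |b| := by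
          apply mul_le_mul_of_nonneg_left _ (abs_nonneg t)
          rcases hab ω with ⟨h1, h2⟩
          refine abs_le.2 ⟨?_, ?_⟩
          · have : -max |a| |b| ≤ -|a| := by simp
            have h3 : -|a| ≤ a := neg_abs_le a
            linarith
          · have : |b| ≤ max |a| |b| := le_max_right _ _
            have h3 : b ≤ |b| := le_abs_self b
            linarith
    have hi1 : Integrable (fun ω => (b - Y ω) / (b - a) * exp (t * a)) μ := by
      exact (((integrable_const b).sub hYint).div_const _).mul_const _
    have hi2 : Integrable (fun ω => (Y ω - a) / (b - a) * exp (t * b)) μ := by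
      exact ((hYint.sub (integrable_const a)).div_const _).mul_const _
    have hint2 : Integrable
        (fun ω => (b - Y ω) / (b - a) * exp (t * a) + (Y ω - a) / (b - a) * exp (t * b)) μ :=
      hi1.add hi2
    have hle : ∫ ω, exp (t * Y ω) ∂μ ≤ (b * exp (t * a) - a * exp (t * b)) / (b - a) := by
      calc ∫ ω, exp (t * Y ω) ∂μ
          ≤ ∫ ω, ((b - Y ω) / (b - a) * exp (t * a) + (Y ω - a) / (b - a) * exp (t * b)) ∂μ :=
            integral_mono hint1 hint2 hpt
      _ = (b * exp (t * a) - a * exp (t * b)) / (b - a) := by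
          have e1 : ∫ ω, (b - Y ω) ∂μ = b := by
            rw [integral_sub (integrable_const b) hYint, hmean, integral_const]; simp
          have e2 : ∫ ω, (Y ω - a) ∂μ = -a := by
            rw [integral_sub hYint (integrable_const a), hmean, integral_const]; simp
          rw [integral_add hi1 hi2, integral_mul_const, integral_mul_const,
            integral_div, integral_div, e1, e2]
          ring
    -- identify with the analytic function
    set p : ℝ := -a / (b - a) with hp
    have hp0 : 0 ≤ p := by
      apply div_nonneg (by linarith) (by linarith)
    have hp1 : p ≤ 1 := by
      rw [hp, div_le_one hba]; linarith
    set h : ℝ := t * (b - a) with hh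
    have hden : 1 - p + p * exp h = (b - a * exp (t * (b - a))) / (b - a) := by
      rw [hp, hh]; field_simp; ring
    have hkey : (b * exp (t * a) - a * exp (t * b)) / (b - a)
        = exp (-p * h + log (1 - p + p * exp h)) := by
      have hdpos : 0 < 1 - p + p * exp h := den_pos hp0 hp1 h
      rw [exp_add, exp_log hdpos, hden]
      have hph : -p * h = t * a := by rw [hp, hh]; field_simp
      rw [hph, ← mul_div_assoc]
      have hexp : exp (t * a) * exp (t * (b - a)) = exp (t * b) := by
        rw [← exp_add]; ring_nf
      congr 1
      linear_combination a * hexp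
    calc ∫ ω, exp (t * Y ω) ∂μ ≤ (b * exp (t * a) - a * exp (t * b)) / (b - a) := hle
    _ = exp (-p * h + log (1 - p + p * exp h)) := hkey
    _ ≤ exp (h ^ 2 / 8) := exp_le_exp.2 (L_le hp0 hp1 h)
    _ = exp (t ^ 2 * (b - a) ^ 2 / 8) := by rw [hh]; congr 1; ring

/-- One-sided Hoeffding inequality for the i.i.d. sum of bounded variables. -/
lemma chernoff_pi {D : Type*} [MeasurableSpace D] (Pd : Measure D) [IsProbabilityMeasure Pd]
    (Z : D → ℝ) (hZ : Measurable Z) (U : ℝ) (hU : 0 < U) (hZb : ∀ d, Z d ∈ Set.Icc 0 U)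
    (M : ℕ) (hM : 1 ≤ M) (τ : ℝ) (hτ : 0 < τ) :
    (Measure.pi fun _ : Fin M => Pd)
      {ω | (M : ℝ) * τ ≤ ∑ j, ((∫ d, Z d ∂Pd) - Z (ω j))}
      ≤ ENNReal.ofReal (exp (-2 * M * τ ^ 2 / U ^ 2)) := by
  letI : MeasureSpace D := ⟨Pd⟩
  set m : ℝ := ∫ d, Z d ∂Pd with hm
  set Y : D → ℝ := fun d => m - Z d with hY
  have hYmeas : Measurable Y := measurable_const.sub hZ
  have hZint : Integrable Z Pd := integrable_of_abs_le hZ U fun d => by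
    rcases hZb d with ⟨h1, h2⟩; rw [abs_of_nonneg h1]; exact h2
  have hm0 : 0 ≤ m := integral_nonneg fun d => (hZb d).1
  have hmU : m ≤ U := by
    have : ∫ d, Z d ∂Pd ≤ ∫ _ : D, U ∂Pd :=
      integral_mono hZint (integrable_const U) fun d => (hZb d).2
    simpa using this
  have hmean : ∫ d, Y d ∂Pd = 0 := by
    rw [hY]
    simp only
    rw [integral_sub (integrable_const m) hZint, integral_const]
    simp [hm]
  have hYb : ∀ d, Y d ∈ Set.Icc (m - U) m := fun d =>
    ⟨show m - U ≤ m - Z d by linarith [(hZb d).2],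
     show m - Z d ≤ m by linarith [(hZb d).1]⟩
  set t₀ : ℝ := 4 * τ / U ^ 2 with ht₀
  have ht₀pos : 0 < t₀ := by positivity
  set Pm : Measure (Fin M → D) := Measure.pi fun _ => Pd with hPm
  haveI : IsProbabilityMeasure Pm := by rw [hPm]; infer_instance
  set S : (Fin M → D) → ℝ := fun ω => ∑ j, Y (ω j) with hS
  have hSmeas : Measurable S := by
    apply Finset.measurable_sum
    exact fun j _ => hYmeas.comp (measurable_pi_apply j)
  have hSb : ∀ ω, |S ω| ≤ M * U := by
    intro ω
    have : ∀ j : Fin M, |Y (ω j)| ≤ U := fun j => by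
      rcases hYb (ω j) with ⟨h1, h2⟩
      refine abs_le.2 ⟨by linarith, by linarith⟩
    calc |S ω| ≤ ∑ j, |Y (ω j)| := Finset.abs_sum_le_sum_abs _ _
    _ ≤ ∑ _j : Fin M, U := Finset.sum_le_sum fun j _ => this j
    _ = M * U := by simp [Finset.sum_const, Finset.card_univ, mul_comm]
  have hint : Integrable (fun ω => exp (t₀ * S ω)) Pm := by
    refine integrable_of_abs_le (by fun_prop) (exp (t₀ * (M * U))) fun ω => ?_
    rw [abs_of_pos (exp_pos _)]
    exact exp_le_exp.2 (mul_le_mul_of_nonneg_left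
      (le_trans (le_abs_self _) (hSb ω)) ht₀pos.le)
  -- mgf of the sum is the M-th power of the mgf of Y
  have hmgf : mgf S Pm t₀ = (∫ d, exp (t₀ * Y d) ∂Pd) ^ M := by
    have : ∀ ω : Fin M → D, exp (t₀ * S ω) = ∏ j, exp (t₀ * Y (ω j)) := by
      intro ω
      rw [hS]
      simp only
      rw [Finset.mul_sum, Real.exp_sum]
    have h1 : Pm = (volume : Measure (Fin M → D)) :=
      show Measure.pi (fun _ : Fin M => Pd) = volume from MeasureTheory.volume_pi.symm
    rw [mgf]
    simp only [this]
    rw [h1]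
    have h2 := MeasureTheory.integral_fintype_prod_eq_pow (ι := Fin M) (fun d => exp (t₀ * Y d)) (μ := (volume : Measure D))
    rw [MeasureTheory.volume_pi, h2, Fintype.card_fin]
    rfl
  -- Chernoff bound
  have hcher := ProbabilityTheory.measure_ge_le_exp_mul_mgf (μ := Pm) (X := S)
    ((M : ℝ) * τ) ht₀pos.le hint
  have hhoef : ∫ d, exp (t₀ * Y d) ∂Pd ≤ exp (t₀ ^ 2 * U ^ 2 / 8) := by
    have := hoeffding_lemma Pd Y hYmeas (m - U) m hYb hmean t₀
    simpa using this
  have hfinal : exp (-t₀ * ((M : ℝ) * τ)) * mgf S Pm t₀ ≤ exp (-2 * M * τ ^ 2 / U ^ 2) := by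
    rw [hmgf]
    calc exp (-t₀ * ((M : ℝ) * τ)) * (∫ d, exp (t₀ * Y d) ∂Pd) ^ M
        ≤ exp (-t₀ * ((M : ℝ) * τ)) * exp (t₀ ^ 2 * U ^ 2 / 8) ^ M := by
          apply mul_le_mul_of_nonneg_left _ (exp_pos _).le
          exact pow_le_pow_left₀ (integral_nonneg fun d => (exp_pos _).le) hhoef M
    _ = exp (-t₀ * ((M : ℝ) * τ) + M * (t₀ ^ 2 * U ^ 2 / 8)) := by
          rw [← Real.exp_nat_mul, ← Real.exp_add]
    _ = exp (-2 * M * τ ^ 2 / U ^ 2) := by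
          congr 1
          rw [ht₀]
          field_simp
          ring
  have hne : Pm {ω | (M : ℝ) * τ ≤ S ω} ≠ ⊤ := measure_ne_top _ _
  have : Pm {ω | (M : ℝ) * τ ≤ S ω} ≤ ENNReal.ofReal (exp (-2 * M * τ ^ 2 / U ^ 2)) :=
    (ENNReal.le_ofReal_iff_toReal_le hne (exp_pos _).le).2 (le_trans hcher hfinal)
  exact this

/-- Markov + Hoeffding for bounded costs with state-dependent thresholds: if the
probability (under `P_x ⊗ P_d^M`) that the empirical mean of `g(x,·)` over `M` draws
exceeds `c(x) − τ` is at most `α₁`, and `M` meets the Hoeffding bound for range `[0,U]`,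
then for at least a `1 − α₁/(l·δ₂)` fraction of states the true mean
`∫ g(x,d) dP_d` is at most `c(x)`. -/
theorem pac_bounded_mean_threshold {X D : Type*} [MeasurableSpace X] [MeasurableSpace D]
    (Px : Measure X) (Pd : Measure D)
    [IsProbabilityMeasure Px] [IsProbabilityMeasure Pd]
    (g : X × D → ℝ) (hg : Measurable g)
    (U : ℝ) (hU : 0 < U) (hgbdd : ∀ p : X × D, 0 ≤ g p ∧ g p ≤ U)
    (c : X → ℝ) (hc : Measurable c)
    (τ : ℝ) (hτ : 0 < τ)
    (M : ℕ) (hM : 1 ≤ M)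
    (α₁ l δ₂ : ℝ)
    (hα₁ : α₁ ∈ Set.Ioo (0 : ℝ) 1) (hl : l ∈ Set.Ioo (0 : ℝ) 1)
    (hδ₂ : δ₂ ∈ Set.Ioo (0 : ℝ) 1)
    (hlt : α₁ < l * δ₂)
    (hMbound : (M : ℝ) ≥ (U ^ 2 / (2 * τ ^ 2)) * Real.log (1 / ((1 - l) * δ₂)))
    (hjoint : (Px.prod (Measure.pi fun _ : Fin M => Pd))
        {p : X × (Fin M → D) | (1 / (M : ℝ)) * ∑ j, g (p.1, p.2 j) > c p.1 - τ} ≤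
      ENNReal.ofReal α₁) :
    Px {x | (∫ d, g (x, d) ∂Pd) ≤ c x} ≥ ENNReal.ofReal (1 - α₁ / (l * δ₂)) := by
  obtain ⟨hα₁0, hα₁1⟩ := hα₁
  obtain ⟨hl0, hl1⟩ := hl
  obtain ⟨hδ₂0, hδ₂1⟩ := hδ₂
  set Pm : Measure (Fin M → D) := Measure.pi fun _ : Fin M => Pd with hPm
  haveI : IsProbabilityMeasure Pm := by rw [hPm]; infer_instance
  set μbar : X → ℝ := fun x => ∫ d, g (x, d) ∂Pd with hμbar
  have hμmeas : Measurable μbar := by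
    have : StronglyMeasurable μbar :=
      hg.stronglyMeasurable.integral_prod_right'
    exact this.measurable
  set A : Set (X × (Fin M → D)) :=
    {p : X × (Fin M → D) | (1 / (M : ℝ)) * ∑ j, g (p.1, p.2 j) > c p.1 - τ} with hA
  have hAmeas : MeasurableSet A := by
    apply measurableSet_lt
    · exact (hc.comp measurable_fst).sub measurable_const
    · apply Measurable.const_mul
      apply Finset.measurable_sum
      intro j _
      exact hg.comp (measurable_fst.prodMk ((measurable_pi_apply j).comp measurable_snd))
  set F : X → ENNReal := fun x => Pm (Prod.mk x ⁻¹' A) with hF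
  have hFmeas : Measurable F := measurable_measure_prodMk_left hAmeas
  have hlint : ∫⁻ x, F x ∂Px = (Px.prod Pm) A := (Measure.prod_apply hAmeas).symm
  -- the set of "bad" x
  set bad : Set X := {x | c x < μbar x} with hbad
  have hbadmeas : MeasurableSet bad := measurableSet_lt hc hμmeas
  -- numeric facts
  have hs0 : 0 < (1 - l) * δ₂ := by nlinarith
  have hexp_le : exp (-2 * M * τ ^ 2 / U ^ 2) ≤ (1 - l) * δ₂ := by
    have hlog : Real.log (1 / ((1 - l) * δ₂)) = -Real.log ((1 - l) * δ₂) := by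
      rw [one_div, Real.log_inv]
    rw [hlog] at hMbound
    have h1 : -2 * M * τ ^ 2 / U ^ 2 ≤ Real.log ((1 - l) * δ₂) := by
      have hM' : (U ^ 2 / (2 * τ ^ 2)) * (-Real.log ((1 - l) * δ₂)) ≤ M := hMbound
      rw [div_mul_eq_mul_div, div_le_iff₀ (by positivity)] at hM'
      rw [div_le_iff₀ (by positivity)]
      nlinarith [hM']
    calc exp (-2 * M * τ ^ 2 / U ^ 2) ≤ exp (Real.log ((1 - l) * δ₂)) := exp_le_exp.2 h1
    _ = (1 - l) * δ₂ := exp_log hs0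
  -- for bad x, F x is at least l * δ₂
  have hFbad : ∀ x ∈ bad, ENNReal.ofReal (l * δ₂) ≤ F x := by
    intro x hx
    have hxc : c x < μbar x := hx
    -- complement of the preimage set
    have hpre : Prod.mk x ⁻¹' A = {ω : Fin M → D | c x - τ < (1 / (M : ℝ)) * ∑ j, g (x, ω j)} := rfl
    have hsub : (Prod.mk x ⁻¹' A)ᶜ ⊆
        {ω : Fin M → D | (M : ℝ) * τ ≤ ∑ j, (μbar x - g (x, ω j))} := by
      intro ω hω
      simp only [hpre, Set.mem_compl_iff, Set.mem_setOf_eq, not_lt] at hω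
      have hMpos : (0:ℝ) < M := by exact_mod_cast hM
      have hsum : ∑ j, g (x, ω j) ≤ (M : ℝ) * (c x - τ) := by
        rw [one_div] at hω
        calc ∑ j, g (x, ω j) = (M:ℝ) * ((M:ℝ)⁻¹ * ∑ j, g (x, ω j)) := by
              field_simp
        _ ≤ (M : ℝ) * (c x - τ) := by
              apply mul_le_mul_of_nonneg_left hω hMpos.le
      simp only [Set.mem_setOf_eq, Finset.sum_sub_distrib, Finset.sum_const,
        Finset.card_univ, Fintype.card_fin, nsmul_eq_mul]
      nlinarith
    have hZmeas : Measurable (fun d => g (x, d)) := hg.comp (measurable_prodMk_left)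
    have hcher := chernoff_pi Pd (fun d => g (x, d)) hZmeas U hU
      (fun d => ⟨(hgbdd (x, d)).1, (hgbdd (x, d)).2⟩) M hM τ hτ
    have hcompl : Pm ((Prod.mk x ⁻¹' A)ᶜ) ≤ ENNReal.ofReal ((1 - l) * δ₂) := by
      calc Pm ((Prod.mk x ⁻¹' A)ᶜ) ≤ Pm {ω | (M : ℝ) * τ ≤ ∑ j, (μbar x - g (x, ω j))} :=
            measure_mono hsub
      _ ≤ ENNReal.ofReal (exp (-2 * M * τ ^ 2 / U ^ 2)) := hcher
      _ ≤ ENNReal.ofReal ((1 - l) * δ₂) := ENNReal.ofReal_le_ofReal hexp_le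
    have hApre : MeasurableSet (Prod.mk x ⁻¹' A) := measurable_prodMk_left hAmeas
    have hFx : F x = 1 - Pm ((Prod.mk x ⁻¹' A)ᶜ) := by
      rw [hF]
      simp only
      rw [← prob_compl_eq_one_sub hApre.compl, compl_compl]
    rw [hFx]
    refine ENNReal.le_sub_of_add_le_right (measure_ne_top _ _) ?_
    calc ENNReal.ofReal (l * δ₂) + Pm ((Prod.mk x ⁻¹' A)ᶜ)
        ≤ ENNReal.ofReal (l * δ₂) + ENNReal.ofReal ((1 - l) * δ₂) := add_le_add le_rfl hcompl
    _ = ENNReal.ofReal (l * δ₂ + (1 - l) * δ₂) := by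
        rw [ENNReal.ofReal_add (by positivity) hs0.le]
    _ = ENNReal.ofReal δ₂ := by ring_nf
    _ ≤ 1 := by
        rw [← ENNReal.ofReal_one]
        exact ENNReal.ofReal_le_ofReal hδ₂1.le
  -- Markov
  have hmarkov : ENNReal.ofReal (l * δ₂) * Px bad ≤ ENNReal.ofReal α₁ := by
    calc ENNReal.ofReal (l * δ₂) * Px bad
        ≤ ENNReal.ofReal (l * δ₂) * Px {x | ENNReal.ofReal (l * δ₂) ≤ F x} := by
          apply mul_le_mul_right
          apply measure_mono
          intro x hx
          exact hFbad x hx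
    _ ≤ ∫⁻ x, F x ∂Px := mul_meas_ge_le_lintegral₀ hFmeas.aemeasurable _
    _ = (Px.prod Pm) A := hlint
    _ ≤ ENNReal.ofReal α₁ := hjoint
  have hld0 : (0:ℝ) < l * δ₂ := by positivity
  have hbadle : Px bad ≤ ENNReal.ofReal (α₁ / (l * δ₂)) := by
    rw [ENNReal.ofReal_div_of_pos hld0]
    rw [ENNReal.le_div_iff_mul_le (Or.inl (by simp [ENNReal.ofReal_eq_zero]; linarith))
      (Or.inl ENNReal.ofReal_ne_top)]
    rw [mul_comm]
    exact hmarkov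
  -- conclude
  have hgood : {x | (∫ d, g (x, d) ∂Pd) ≤ c x} = badᶜ := by
    ext x
    simp [hbad, hμbar, not_lt]
  rw [hgood, prob_compl_eq_one_sub hbadmeas]
  have h1 : ENNReal.ofReal (1 - α₁ / (l * δ₂)) = 1 - ENNReal.ofReal (α₁ / (l * δ₂)) := by
    rw [ENNReal.ofReal_sub _ (by positivity), ENNReal.ofReal_one]
  rw [h1]
  exact tsub_le_tsub_left hbadle 1
end

section
/- Let X ⊆ ℝⁿ be a Borel set, P_x a probability measure on X, (D, 𝒟, P_d) a probability space, and f : X × D → ℝⁿ measurable with respect to the product σ-algebra. Let U ≥ 1 and let h : ℝⁿ → ℝ be Borel measurable with 0 ≤ h(y) ≤ U for all y ∈ ℝⁿ and h(y) ≥ 1 for all y ∈ ℝⁿ \ X. Let λ ∈ [0,1], τ > 0, and let M ≥ 1 be an integer and α₁, l, δ₂ ∈ (0,1) with α₁ < l·δ₂ and M ≥ (U²/(2·τ²))·ln(1/((1−l)·δ₂)). If (P_x ⊗ P_d^M){(x, d₁,…,d_M) : (1/M)·Σ_{j=1}^M h(f(x, d_j)) > h(x) + λ − τ} ≤ α₁,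 then P_x{x ∈ X : P_d({d ∈ D : f(x,d) ∈ X}) ≥ 1 − h(x) − λ} ≥ 1 − α₁/(l·δ₂). -/
open Real MeasureTheory ProbabilityTheory

lemma hoeffding_scalar {p : ℝ} (hp0 : 0 ≤ p) (hp1 : p ≤ 1) (s : ℝ) :
    1 - p + p * Real.exp s ≤ Real.exp (p * s + s ^ 2 / 8) := by
  set den : ℝ → ℝ := fun u => 1 - p + p * exp u with hden
  have dpos : ∀ u, 0 < den u := by
    intro u
    rcases eq_or_lt_of_le hp1 with h | h
    · have : den u = exp u := by simp [hden, ← h]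
      rw [this]; exact exp_pos u
    · have h1 : 0 ≤ p * exp u := mul_nonneg hp0 (exp_pos u).le
      have : 0 < 1 - p := by linarith
      simp only [hden]; linarith
  set φ : ℝ → ℝ := fun u => p * u + u ^ 2 / 8 - Real.log (den u) with hφ
  set G : ℝ → ℝ := fun u => p + u / 4 - p * exp u / den u with hG
  have hden' : ∀ u, HasDerivAt den (p * exp u) u := by
    intro u
    exact ((Real.hasDerivAt_exp u).const_mul p).const_add (1 - p)
  have hφ' : ∀ u, HasDerivAt φ (G u) u := by
    intro u
    have h1 : HasDerivAt (fun u : ℝ => p * u + u ^ 2 / 8) (p + u / 4) u := by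
      have := ((hasDerivAt_pow 2 u).div_const 8).const_add (p * u)
      have h2 := (hasDerivAt_id u).const_mul p
      have := ((hasDerivAt_id u).const_mul p).add ((hasDerivAt_pow 2 u).div_const 8)
      exact this.congr_deriv (by simp; ring)
    have h2 : HasDerivAt (fun u => Real.log (den u)) (p * exp u / den u) u :=
      (hden' u).log (dpos u).ne'
    exact h1.sub h2
  have hK : ∀ u, HasDerivAt G
      (1 / 4 - (p * exp u * den u - p * exp u * (p * exp u)) / den u ^ 2) u := by
    intro u
    have h1 : HasDerivAt (fun u : ℝ => p + u / 4) (1 / 4) u := by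
      simpa using ((hasDerivAt_id u).div_const 4).const_add p
    have h2 : HasDerivAt (fun u => p * exp u / den u)
        ((p * exp u * den u - p * exp u * (p * exp u)) / den u ^ 2) u :=
      (((Real.hasDerivAt_exp u).const_mul p)).div (hden' u) (dpos u).ne'
    exact h1.sub h2
  have hK0 : ∀ u, 0 ≤ 1 / 4 - (p * exp u * den u - p * exp u * (p * exp u)) / den u ^ 2 := by
    intro u
    set a := 1 - p
    set b := p * exp u with hb
    have hden2 : den u = a + b := rfl
    have hnum : b * (a + b) - b * b = a * b := by ring
    rw [hden2, hnum]
    have hab : 0 < a + b := hden2 ▸ dpos u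
    have hpos : 0 < (a + b) ^ 2 := by positivity
    rw [sub_nonneg, div_le_iff₀ hpos]
    clear_value a b
    nlinarith [sq_nonneg (a - b)]
  have Gmono : Monotone G :=
    monotone_of_deriv_nonneg (fun u => (hK u).differentiableAt)
      (fun u => by rw [(hK u).deriv]; exact hK0 u)
  have G0 : G 0 = 0 := by
    simp only [hG]
    have : den 0 = 1 := by simp [hden]
    rw [this]
    simp
  have φ0 : φ 0 = 0 := by
    have : den 0 = 1 := by simp [hden]
    simp [hφ, this]
  have hnonneg : 0 ≤ φ s := by
    rcases le_total 0 s with hs | hs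
    · have mono : MonotoneOn φ (Set.Ici 0) := by
        refine monotoneOn_of_deriv_nonneg (convex_Ici 0)
          (Continuous.continuousOn (by
            exact continuous_iff_continuousAt.2 fun u => (hφ' u).continuousAt))
          (fun x hx => (hφ' x).differentiableAt.differentiableWithinAt) ?_
        intro x hx
        rw [(hφ' x).deriv]
        rw [interior_Ici] at hx
        have := Gmono (le_of_lt hx)
        rw [G0] at this
        exact this
      have := mono (Set.self_mem_Ici) (Set.mem_Ici.2 hs) hs
      rw [φ0] at this; exact this
    · have mono : AntitoneOn φ (Set.Iic 0) := by
        refine antitoneOn_of_deriv_nonpos (convex_Iic 0)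
          (Continuous.continuousOn (by
            exact continuous_iff_continuousAt.2 fun u => (hφ' u).continuousAt))
          (fun x hx => (hφ' x).differentiableAt.differentiableWithinAt) ?_
        intro x hx
        rw [(hφ' x).deriv]
        rw [interior_Iic] at hx
        have := Gmono (le_of_lt hx)
        rw [G0] at this
        exact this
      have := mono (Set.mem_Iic.2 hs) (Set.self_mem_Iic) hs
      rw [φ0] at this; exact this
  have : Real.log (den s) ≤ p * s + s ^ 2 / 8 := by
    simp only [hφ] at hnonneg; linarith
  calc 1 - p + p * exp s = den s := rfl
    _ ≤ exp (p * s + s ^ 2 / 8) := by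
        rw [← Real.exp_log (dpos s)]; exact Real.exp_le_exp.2 this

lemma hoeffding_mgf {Ω : Type*} [MeasurableSpace Ω] (μ : Measure Ω) [IsProbabilityMeasure μ]
    (Y : Ω → ℝ) (hY : Measurable Y) (U : ℝ) (hU : 0 < U)
    (hb : ∀ ω, 0 ≤ Y ω ∧ Y ω ≤ U) (t : ℝ) :
    ∫ ω, Real.exp (t * Y ω) ∂μ ≤ Real.exp (t * (∫ ω, Y ω ∂μ) + t ^ 2 * U ^ 2 / 8) := by
  have hYint : Integrable Y μ := by
    refine (integrable_const U).mono' hY.aestronglyMeasurable (ae_of_all _ fun ω => ?_)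
    rw [Real.norm_eq_abs, abs_of_nonneg (hb ω).1]; exact (hb ω).2
  have hexpint : Integrable (fun ω => Real.exp (t * Y ω)) μ := by
    refine (integrable_const (Real.exp (|t| * U))).mono'
      ((Real.measurable_exp.comp (hY.const_mul t)).aestronglyMeasurable) (ae_of_all _ fun ω => ?_)
    rw [Real.norm_eq_abs, abs_of_nonneg (Real.exp_pos _).le]
    refine Real.exp_le_exp.2 ?_
    calc t * Y ω ≤ |t * Y ω| := le_abs_self _
      _ = |t| * |Y ω| := abs_mul _ _
      _ ≤ |t| * U := by
          refine mul_le_mul_of_nonneg_left ?_ (abs_nonneg t)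
          rw [abs_of_nonneg (hb ω).1]; exact (hb ω).2
  set m := ∫ ω, Y ω ∂μ with hm
  have hm0 : 0 ≤ m := integral_nonneg fun ω => (hb ω).1
  have hmU : m ≤ U := by
    calc m ≤ ∫ _, U ∂μ := integral_mono hYint (integrable_const U) fun ω => (hb ω).2
      _ = U := by simp
  have pointwise : ∀ ω, Real.exp (t * Y ω) ≤ 1 + Y ω * ((Real.exp (t * U) - 1) / U) := by
    intro ω
    have hθ0 : 0 ≤ Y ω / U := div_nonneg (hb ω).1 hU.le
    have hθ1 : Y ω / U ≤ 1 := (div_le_one hU).2 (hb ω).2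
    have := convexOn_exp.2 (Set.mem_univ (0 : ℝ)) (Set.mem_univ (t * U))
      (by linarith : (0:ℝ) ≤ 1 - Y ω / U) hθ0 (by ring)
    simp only [smul_eq_mul, mul_zero, zero_add] at this
    have harg : Y ω / U * (t * U) = t * Y ω := by field_simp
    rw [harg] at this
    calc Real.exp (t * Y ω) ≤ (1 - Y ω / U) * Real.exp 0 + Y ω / U * Real.exp (t * U) := this
      _ = 1 + Y ω * ((Real.exp (t * U) - 1) / U) := by
          rw [Real.exp_zero]; field_simp; ring
  have step1 : ∫ ω, Real.exp (t * Y ω) ∂μ ≤ 1 + m * ((Real.exp (t * U) - 1) / U) := by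
    have := integral_mono hexpint
      ((integrable_const (1:ℝ)).add (hYint.mul_const _)) pointwise
    calc ∫ ω, Real.exp (t * Y ω) ∂μ
        ≤ ∫ ω, (1 + Y ω * ((Real.exp (t * U) - 1) / U)) ∂μ := this
      _ = 1 + m * ((Real.exp (t * U) - 1) / U) := by
          rw [integral_add (integrable_const 1) (hYint.mul_const _), integral_const,
            integral_mul_const]
          simp [hm]
  have step2 : 1 + m * ((Real.exp (t * U) - 1) / U) ≤
      Real.exp (t * m + t ^ 2 * U ^ 2 / 8) := by
    have := hoeffding_scalar (div_nonneg hm0 hU.le) ((div_le_one hU).2 hmU) (t * U)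
    have h1 : 1 - m / U + m / U * Real.exp (t * U) = 1 + m * ((Real.exp (t * U) - 1) / U) := by
      field_simp; ring
    have h2 : m / U * (t * U) + (t * U) ^ 2 / 8 = t * m + t ^ 2 * U ^ 2 / 8 := by
      field_simp
    rw [h1, h2] at this
    exact this
  linarith

lemma hoeffding_chernoff_pi {D : Type*} [MeasurableSpace D] (Pd : Measure D)
    [IsProbabilityMeasure Pd] (Y : D → ℝ) (hY : Measurable Y) (U : ℝ) (hU : 0 < U)
    (hb : ∀ d, 0 ≤ Y d ∧ Y d ≤ U) (M : ℕ) (τ : ℝ) (hτ : 0 < τ) :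
    (Measure.pi fun _ : Fin M => Pd) {w | ∑ j, Y (w j) ≤ M * ((∫ d, Y d ∂Pd) - τ)} ≤
      ENNReal.ofReal (Real.exp (-(2 * M * τ ^ 2 / U ^ 2))) := by
  letI : MeasureSpace D := ⟨Pd⟩
  set ν : Measure (Fin M → D) := Measure.pi fun _ : Fin M => Pd with hν
  haveI : IsProbabilityMeasure ν := by
    constructor
    simp [hν, Measure.pi_univ]
  set t : ℝ := -(4 * τ / U ^ 2) with ht_def
  have ht : t ≤ 0 := by
    rw [ht_def]
    have : 0 ≤ 4 * τ / U ^ 2 := by positivity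
    linarith
  set S : (Fin M → D) → ℝ := fun w => ∑ j, Y (w j) with hS
  have hSmeas : Measurable S :=
    Finset.measurable_sum _ fun j _ => hY.comp (measurable_pi_apply j)
  have hprodexp : ∀ w, Real.exp (t * S w) = ∏ j : Fin M, Real.exp (t * Y (w j)) := by
    intro w
    rw [← Real.exp_sum]
    congr 1
    rw [Finset.mul_sum]
  have hint : Integrable (fun w => Real.exp (t * S w)) ν := by
    refine (integrable_const (Real.exp (|t| * (M * U)))).mono'
      ((Real.measurable_exp.comp (hSmeas.const_mul t)).aestronglyMeasurable)
      (ae_of_all _ fun w => ?_)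
    rw [Real.norm_eq_abs, abs_of_nonneg (Real.exp_pos _).le]
    refine Real.exp_le_exp.2 ?_
    have hSb : |S w| ≤ M * U := by
      calc |S w| ≤ ∑ j : Fin M, |Y (w j)| := Finset.abs_sum_le_sum_abs _ _
        _ ≤ ∑ _j : Fin M, U := Finset.sum_le_sum fun j _ => by
            rw [abs_of_nonneg (hb (w j)).1]; exact (hb (w j)).2
        _ = M * U := by simp [mul_comm]
    calc t * S w ≤ |t * S w| := le_abs_self _
      _ = |t| * |S w| := abs_mul _ _
      _ ≤ |t| * (M * U) := mul_le_mul_of_nonneg_left hSb (abs_nonneg t)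
  set m := ∫ d, Y d ∂Pd with hm
  have key := measure_le_le_exp_mul_mgf (X := S) (μ := ν) (↑M * (m - τ)) ht hint
  have hmgf : mgf S ν t = (∫ d, Real.exp (t * Y d) ∂Pd) ^ M := by
    rw [mgf]
    simp_rw [hprodexp]
    have := MeasureTheory.integral_fintype_prod_eq_pow (ι := Fin M)
      (fun d => Real.exp (t * Y d)) (𝕜 := ℝ) (μ := Pd)
    simpa using this
  have hfac : ∫ d, Real.exp (t * Y d) ∂Pd ≤ Real.exp (t * m + t ^ 2 * U ^ 2 / 8) :=
    hoeffding_mgf Pd Y hY U hU hb t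
  have hfac0 : 0 ≤ ∫ d, Real.exp (t * Y d) ∂Pd :=
    integral_nonneg fun d => (Real.exp_pos _).le
  have hbound : (ν {w | S w ≤ ↑M * (m - τ)}).toReal ≤ Real.exp (-(2 * M * τ ^ 2 / U ^ 2)) := by
    calc (ν {w | S w ≤ ↑M * (m - τ)}).toReal
        ≤ Real.exp (-t * (↑M * (m - τ))) * mgf S ν t := key
      _ ≤ Real.exp (-t * (↑M * (m - τ))) * Real.exp (t * m + t ^ 2 * U ^ 2 / 8) ^ M := by
          rw [hmgf]
          exact mul_le_mul_of_nonneg_left (pow_le_pow_left₀ hfac0 hfac M) (Real.exp_pos _).le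
      _ = Real.exp (-t * (↑M * (m - τ)) + M * (t * m + t ^ 2 * U ^ 2 / 8)) := by
          rw [← Real.exp_nat_mul, ← Real.exp_add]
      _ = Real.exp (-(2 * M * τ ^ 2 / U ^ 2)) := by
          congr 1
          rw [ht_def]
          field_simp
          ring
  have hne : ν {w | S w ≤ ↑M * (m - τ)} ≠ ⊤ := measure_ne_top _ _
  calc ν {w | S w ≤ ↑M * (m - τ)}
      = ENNReal.ofReal ((ν {w | S w ≤ ↑M * (m - τ)}).toReal) := (ENNReal.ofReal_toReal hne).symm
    _ ≤ ENNReal.ofReal (Real.exp (-(2 * M * τ ^ 2 / U ^ 2))) := ENNReal.ofReal_le_ofReal hbound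

lemma ofReal_one_sub_le' {c : ℝ} (hc : 0 ≤ c) :
    ENNReal.ofReal (1 - c) ≤ 1 - ENNReal.ofReal c := by
  rcases le_or_gt 1 c with hcase | hcase
  · rw [ENNReal.ofReal_eq_zero.2 (by linarith)]; exact zero_le
  · refine ENNReal.le_sub_of_add_le_right ENNReal.ofReal_ne_top ?_
    rw [← ENNReal.ofReal_add (by linarith) hc]
    simp

/-- PAC safety certification III (stochastic barrier form, one-to-many samples): if the
probability (under `P_x ⊗ P_d^M`) that the empirical mean of `h ∘ f` over `M` draws
exceeds `h x + λ − τ` is at most `α₁`, and `M` meets the Hoeffding bound for range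
`[0,U]`, then for at least a `1 − α₁/(l·δ₂)` fraction of states `x ∈ X` the one-step
safety probability is at least `1 − h x − λ`. -/
theorem pac_one_step_safety_III {n : ℕ} {D : Type*} [MeasurableSpace D]
    (X : Set (Fin n → ℝ)) (hX : MeasurableSet X)
    (Px : Measure ↥X) (Pd : Measure D)
    [IsProbabilityMeasure Px] [IsProbabilityMeasure Pd]
    (f : ↥X × D → (Fin n → ℝ)) (hf : Measurable f)
    (U : ℝ) (hU : 1 ≤ U)
    (h : (Fin n → ℝ) → ℝ) (hh : Measurable h)
    (hbdd : ∀ y, 0 ≤ h y ∧ h y ≤ U)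
    (hout : ∀ y, y ∉ X → 1 ≤ h y)
    (lam : ℝ) (hlam : lam ∈ Set.Icc (0 : ℝ) 1)
    (τ : ℝ) (hτ : 0 < τ)
    (M : ℕ) (hM : 1 ≤ M)
    (α₁ l δ₂ : ℝ)
    (hα₁ : α₁ ∈ Set.Ioo (0 : ℝ) 1) (hl : l ∈ Set.Ioo (0 : ℝ) 1)
    (hδ₂ : δ₂ ∈ Set.Ioo (0 : ℝ) 1)
    (hlt : α₁ < l * δ₂)
    (hMbound : (M : ℝ) ≥ (U ^ 2 / (2 * τ ^ 2)) * Real.log (1 / ((1 - l) * δ₂)))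
    (hjoint : (Px.prod (Measure.pi fun _ : Fin M => Pd))
        {p : ↥X × (Fin M → D) |
          (1 / (M : ℝ)) * ∑ j, h (f (p.1, p.2 j)) > h ↑p.1 + lam - τ} ≤
      ENNReal.ofReal α₁) :
    Px {x : ↥X | Pd {d | f (x, d) ∈ X} ≥ ENNReal.ofReal (1 - h ↑x - lam)} ≥
      ENNReal.ofReal (1 - α₁ / (l * δ₂)) := by
  obtain ⟨hlam0, hlam1⟩ := hlam
  obtain ⟨hα₁0, hα₁1⟩ := hα₁
  obtain ⟨hl0, hl1⟩ := hl
  obtain ⟨hδ0, hδ1⟩ := hδ₂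
  have hU0 : (0:ℝ) < U := lt_of_lt_of_le one_pos hU
  have hMpos : (0:ℝ) < M := by exact_mod_cast hM
  set ν : Measure (Fin M → D) := Measure.pi fun _ : Fin M => Pd with hν
  haveI : IsProbabilityMeasure ν := ⟨by simp [hν, Measure.pi_univ]⟩
  have hhf : Measurable fun p : ↥X × D => h (f p) := hh.comp hf
  set g : ↥X → ℝ := fun x => ∫ d, h (f (x, d)) ∂Pd with hg
  have hgmeas : Measurable g :=
    (hhf.stronglyMeasurable.integral_prod_right').measurable
  set B : Set ↥X := {x | h ↑x + lam < g x} with hB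
  have hBmeas : MeasurableSet B :=
    measurableSet_lt ((hh.comp measurable_subtype_coe).add_const lam) hgmeas
  set S : Set (↥X × (Fin M → D)) :=
    {p | (1 / (M : ℝ)) * ∑ j, h (f (p.1, p.2 j)) > h ↑p.1 + lam - τ} with hSdef
  have hsum_meas : Measurable fun p : ↥X × (Fin M → D) => ∑ j, h (f (p.1, p.2 j)) :=
    Finset.measurable_sum _ fun j _ =>
      hhf.comp (measurable_fst.prodMk ((measurable_pi_apply j).comp measurable_snd))
  have hSmeas : MeasurableSet S := by
    apply measurableSet_lt
    · exact ((hh.comp (measurable_subtype_coe.comp measurable_fst)).add_const lam).sub_const τ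
    · exact hsum_meas.const_mul _
  -- exponential bound
  have ε0pos : 0 < (1 - l) * δ₂ := by nlinarith
  have hexp_le : Real.exp (-(2 * M * τ ^ 2 / U ^ 2)) ≤ (1 - l) * δ₂ := by
    rw [← Real.exp_log ε0pos]
    apply Real.exp_le_exp.2
    rw [one_div, Real.log_inv, ge_iff_le] at hMbound
    set L := Real.log ((1 - l) * δ₂)
    have h2 : U ^ 2 * (-L) ≤ (M : ℝ) * (2 * τ ^ 2) := by
      have := mul_le_mul_of_nonneg_right hMbound (by positivity : (0:ℝ) ≤ 2 * τ ^ 2)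
      calc U ^ 2 * (-L) = U ^ 2 / (2 * τ ^ 2) * (-L) * (2 * τ ^ 2) := by
            field_simp
        _ ≤ (M : ℝ) * (2 * τ ^ 2) := this
    rw [neg_le, le_div_iff₀ (by positivity : (0:ℝ) < U ^ 2)]
    nlinarith [h2]
  have hεsmall : ENNReal.ofReal (Real.exp (-(2 * M * τ ^ 2 / U ^ 2))) ≤
      ENNReal.ofReal ((1 - l) * δ₂) := ENNReal.ofReal_le_ofReal hexp_le
  -- lower bound on sections over B
  have hstep1 : ∀ x ∈ B, ENNReal.ofReal (l * δ₂) ≤ ν (Prod.mk x ⁻¹' S) := by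
    intro x hx
    set Yx : D → ℝ := fun d => h (f (x, d)) with hYx
    have hYxmeas : Measurable Yx :=
      hh.comp (hf.comp (measurable_const.prodMk measurable_id))
    have hsec : Prod.mk x ⁻¹' S =
        {w : Fin M → D | (1 / (M : ℝ)) * ∑ j, Yx (w j) > h ↑x + lam - τ} := rfl
    have hcompl : (Prod.mk x ⁻¹' S)ᶜ ⊆
        {w : Fin M → D | ∑ j, Yx (w j) ≤ M * ((∫ d, Yx d ∂Pd) - τ)} := by
      intro w hw
      rw [Set.mem_compl_iff, hsec, Set.mem_setOf_eq, not_lt] at hw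
      have hgx : h ↑x + lam < g x := hx
      have hgxint : (∫ d, Yx d ∂Pd) = g x := rfl
      have hle : ∑ j, Yx (w j) ≤ M * (h ↑x + lam - τ) := by
        calc ∑ j, Yx (w j) = M * ((1 / (M : ℝ)) * ∑ j, Yx (w j)) := by
              field_simp
          _ ≤ M * (h ↑x + lam - τ) := mul_le_mul_of_nonneg_left hw hMpos.le
      rw [Set.mem_setOf_eq, hgxint]
      nlinarith
    have hchern := hoeffding_chernoff_pi Pd Yx hYxmeas U hU0
      (fun d => ⟨(hbdd _).1, (hbdd _).2⟩) M τ hτ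
    have hsecmeas : MeasurableSet (Prod.mk x ⁻¹' S) := measurable_prodMk_left hSmeas
    have h1 : ν ((Prod.mk x ⁻¹' S)ᶜ) ≤ ENNReal.ofReal ((1 - l) * δ₂) :=
      le_trans (le_trans (measure_mono hcompl) hchern) hεsmall
    have h2 : ν (Prod.mk x ⁻¹' S) = 1 - ν ((Prod.mk x ⁻¹' S)ᶜ) := by
      have := prob_compl_eq_one_sub (μ := ν) hsecmeas.compl
      rwa [compl_compl] at this
    rw [h2]
    refine ENNReal.le_sub_of_add_le_right (measure_ne_top _ _) ?_
    calc ENNReal.ofReal (l * δ₂) + ν ((Prod.mk x ⁻¹' S)ᶜ)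
        ≤ ENNReal.ofReal (l * δ₂) + ENNReal.ofReal ((1 - l) * δ₂) := add_le_add_right h1 _
      _ = ENNReal.ofReal δ₂ := by
          rw [← ENNReal.ofReal_add (by positivity) ε0pos.le]
          ring_nf
      _ ≤ 1 := by
          rw [← ENNReal.ofReal_one]
          exact ENNReal.ofReal_le_ofReal hδ1.le
  -- bound on Px B
  have hldpos : (0:ℝ) < l * δ₂ := by positivity
  have hPxB : Px B ≤ ENNReal.ofReal (α₁ / (l * δ₂)) := by
    have hfub : (Px.prod ν) S = ∫⁻ x, ν (Prod.mk x ⁻¹' S) ∂Px := Measure.prod_apply hSmeas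
    have hlow : ENNReal.ofReal (l * δ₂) * Px B ≤ (Px.prod ν) S := by
      rw [hfub]
      calc ENNReal.ofReal (l * δ₂) * Px B
          = ∫⁻ _ in B, ENNReal.ofReal (l * δ₂) ∂Px := by
            rw [setLIntegral_const]
        _ ≤ ∫⁻ x in B, ν (Prod.mk x ⁻¹' S) ∂Px := setLIntegral_mono' hBmeas hstep1
        _ ≤ ∫⁻ x, ν (Prod.mk x ⁻¹' S) ∂Px := setLIntegral_le_lintegral _ _
    have hmul : Px B * ENNReal.ofReal (l * δ₂) ≤ ENNReal.ofReal α₁ := by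
      rw [mul_comm]; exact le_trans hlow hjoint
    rw [ENNReal.ofReal_div_of_pos hldpos]
    rw [ENNReal.le_div_iff_mul_le
      (Or.inl (by simp [hldpos])) (Or.inl ENNReal.ofReal_ne_top)]
    exact hmul
  -- Markov step for good states
  have hgood : Bᶜ ⊆ {x : ↥X | Pd {d | f (x, d) ∈ X} ≥ ENNReal.ofReal (1 - h ↑x - lam)} := by
    intro x hx
    rw [Set.mem_compl_iff, hB, Set.mem_setOf_eq, not_lt] at hx
    rw [Set.mem_setOf_eq, ge_iff_le]
    set A : Set D := {d | f (x, d) ∈ X} with hA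
    have hfx : Measurable fun d => f (x, d) :=
      hf.comp (measurable_const.prodMk measurable_id)
    have hAmeas : MeasurableSet A := hfx hX
    by_cases hcase : 1 - h ↑x - lam ≤ 0
    · rw [ENNReal.ofReal_eq_zero.2 hcase]; exact zero_le
    push_neg at hcase
    have hint : Integrable (fun d => h (f (x, d))) Pd := by
      refine (integrable_const U).mono'
        (hh.comp hfx).aestronglyMeasurable (ae_of_all _ fun d => ?_)
      rw [Real.norm_eq_abs, abs_of_nonneg (hbdd _).1]; exact (hbdd _).2
    have hmark : Pd Aᶜ ≤ ENNReal.ofReal (h ↑x + lam) := by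
      calc Pd Aᶜ = ∫⁻ _ in Aᶜ, 1 ∂Pd := (setLIntegral_one _).symm
        _ ≤ ∫⁻ d in Aᶜ, ENNReal.ofReal (h (f (x, d))) ∂Pd := by
            refine setLIntegral_mono' hAmeas.compl fun d hd => ?_
            exact ENNReal.one_le_ofReal.2 (hout _ hd)
        _ ≤ ∫⁻ d, ENNReal.ofReal (h (f (x, d))) ∂Pd := setLIntegral_le_lintegral _ _
        _ = ENNReal.ofReal (g x) :=
            (ofReal_integral_eq_lintegral_ofReal hint (ae_of_all _ fun d => (hbdd _).1)).symm
        _ ≤ ENNReal.ofReal (h ↑x + lam) := ENNReal.ofReal_le_ofReal hx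
    have hAc : Pd A = 1 - Pd Aᶜ := by
      have := prob_compl_eq_one_sub (μ := Pd) hAmeas.compl
      rwa [compl_compl] at this
    rw [hAc]
    refine ENNReal.le_sub_of_add_le_right (measure_ne_top _ _) ?_
    calc ENNReal.ofReal (1 - h ↑x - lam) + Pd Aᶜ
        ≤ ENNReal.ofReal (1 - h ↑x - lam) + ENNReal.ofReal (h ↑x + lam) :=
          add_le_add_right hmark _
      _ = ENNReal.ofReal 1 := by
          rw [← ENNReal.ofReal_add (by linarith) (by have := (hbdd (↑x)).1; linarith)]
          ring_nf
      _ = 1 := ENNReal.ofReal_one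
  calc ENNReal.ofReal (1 - α₁ / (l * δ₂))
      ≤ 1 - ENNReal.ofReal (α₁ / (l * δ₂)) :=
        ofReal_one_sub_le' (div_nonneg hα₁0.le hldpos.le)
    _ ≤ 1 - Px B := tsub_le_tsub_left hPxB 1
    _ = Px Bᶜ := (prob_compl_eq_one_sub hBmeas).symm
    _ ≤ Px {x : ↥X | Pd {d | f (x, d) ∈ X} ≥ ENNReal.ofReal (1 - h ↑x - lam)} :=
        measure_mono hgood
end
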